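/- arXiv:math/0111192 — 3 statements merged into one kernel-verified Lean document; each statement's English description precedes it below -/
import Mathlib

section
/- For any k-bounded partition λ, multiplication by the Schur function s_{(k)} of the one-row partition (k) sends the k-Schur function of λ to the k-Schur function of (k,λ): s_{(k)} · s_λ^{(k)} = s_{(k,λ_1,λ_2,…)}^{(k)}. -/
open scoped BigOperators Classical

noncomputable section

/-- Model of the ring of symmetric functions `Λ = ℚ[h₁,h₂,…]`: the polynomial
ring on the (algebraically independent) complete homogeneous generators. -/
abbrev SymFn : Type := MvPolynomial ℕ ℚ

/-- The complete homogeneous symmetric function `h_r` (`h_0 = 1`). -/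
def hh : ℕ → SymFn
  | 0 => 1
  | r + 1 => MvPolynomial.X r

/-- `h_n` for an integer index, with `h_n = 0` for `n < 0`. -/
def hZ (n : ℤ) : SymFn := if n < 0 then 0 else hh n.toNat

/-- `h_λ = h_{λ₁} h_{λ₂} ⋯`. -/
def hProd (l : List ℕ) : SymFn := (l.map hh).prod

/-- The Schur function via the Jacobi–Trudi determinant
`s_λ = det(h_{λ_i - i + j})_{1 ≤ i,j ≤ ℓ(λ)}`. -/
def schur (l : List ℕ) : SymFn :=
  Matrix.det (Matrix.of fun i j : Fin l.length =>
    hZ (((l.get i : ℕ) : ℤ) - ((i : ℕ) : ℤ) + ((j : ℕ) : ℤ)))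

/-- A partition: a weakly decreasing list of positive integers. -/
def IsPartition (l : List ℕ) : Prop := l.Pairwise (· ≥ ·) ∧ ∀ x ∈ l, 0 < x

/-- A `k`-bounded partition: all parts at most `k`. -/
def KBounded (k : ℕ) (l : List ℕ) : Prop := ∀ x ∈ l, x ≤ k

/-- The main hook-length `h_M(λ) = λ₁ + ℓ(λ) - 1`. -/
def mainHook (l : List ℕ) : ℕ := l.headI + l.length - 1

/-- Dominance order: `Dominates μ λ` means `μ ≥ λ`, i.e.
`λ₁ + ⋯ + λ_i ≤ μ₁ + ⋯ + μ_i` for all `i`. -/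
def Dominates (mu lam : List ℕ) : Prop := ∀ i : ℕ, (lam.take i).sum ≤ (mu.take i).sum

/-- Auxiliary function (with fuel) computing the `k`-split of a partition:
successive blocks of main hook-length exactly `k` (the last block having
main hook-length at most `k`). -/
def kSplitAux (k : ℕ) : ℕ → List ℕ → List (List ℕ)
  | _, [] => []
  | 0, l => [l]
  | fuel + 1, a :: rest =>
    if (a :: rest).length ≤ k + 1 - a ∨ k + 1 - a = 0 then [a :: rest]
    else (a :: rest).take (k + 1 - a) :: kSplitAux k fuel ((a :: rest).drop (k + 1 - a))

/-- The `k`-split `λ^{→k}` of a `k`-bounded partition `λ`. -/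
def kSplit (k : ℕ) (l : List ℕ) : List (List ℕ) := kSplitAux k l.length l

/-- The `k`-split polynomial `G_λ^{(k)} = s_{λ^{(1)}} s_{λ^{(2)}} ⋯ s_{λ^{(r)}}`. -/
def Gk (k : ℕ) (l : List ℕ) : SymFn := ((kSplit k l).map schur).prod

/-- `Λ^{(k)}`: the linear span of the `h_λ` over `k`-bounded partitions `λ`. -/
def LamK (k : ℕ) : Submodule ℚ SymFn :=
  Submodule.span ℚ {f : SymFn | ∃ l : List ℕ, IsPartition l ∧ KBounded k l ∧ f = hProd l}

/-- The `k`-Schur functions (at `t = 1`), defined recursively from a family `T`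
of projection operators by `s_λ^{(k)} = T_{λ₁} (s_{λ₁} ⋅ s_{(λ₂,λ₃,…)}^{(k)})`,
starting from `s_{()}^{(k)} = 1`. -/
def kSchurWith (T : ℕ → (SymFn →ₗ[ℚ] SymFn)) : List ℕ → SymFn
  | [] => 1
  | a :: rest => T a (schur [a] * kSchurWith T rest)

/-- `T` is a family of projection operators for `Λ^{(k)}`:
`T_j G_λ^{(k)} = G_λ^{(k)}` if `λ₁ = j` and `0` otherwise, for every
`k`-bounded partition `λ`.  (Any such family restricts to the projection
operator of Lapointe–Morse on `Λ^{(k)}`.) -/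
def ProjOps (k : ℕ) (T : ℕ → (SymFn →ₗ[ℚ] SymFn)) : Prop :=
  ∀ (j : ℕ) (l : List ℕ), IsPartition l → KBounded k l →
    T j (Gk k l) = if l.headI = j then Gk k l else 0

open Submodule in
/-- products of `hh` indexed by a multiset -/
def HP (s : Multiset ℕ) : SymFn := (s.map hh).prod

lemma HP_zero : HP 0 = 1 := rfl

lemma HP_add (s t : Multiset ℕ) : HP (s + t) = HP s * HP t := by
  simp [HP]

lemma HP_cons (a : ℕ) (s : Multiset ℕ) : HP (a ::ₘ s) = hh a * HP s := by
  simp [HP]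

lemma hProd_eq_HP (l : List ℕ) : hProd l = HP ↑l := by
  simp [hProd, HP]

/-- weight measure -/
def wgt (s : Multiset ℕ) : ℕ := (s.map (fun x => 2 ^ x - 1)).sum

lemma wgt_add (s t : Multiset ℕ) : wgt (s + t) = wgt s + wgt t := by
  simp [wgt]

lemma wgt_le {k : ℕ} {s : Multiset ℕ} (hb : ∀ x ∈ s, x ≤ k) : wgt s ≤ s.sum * 2 ^ k := by
  induction s using Multiset.induction with
  | empty => simp [wgt]
  | cons a s ih =>
    have ha : a ≤ k := hb a (Multiset.mem_cons_self a s)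
    have hs := ih (fun x hx => hb x (Multiset.mem_cons_of_mem hx))
    have hw : wgt (a ::ₘ s) = (2 ^ a - 1) + wgt s := by simp [wgt]
    rw [hw, Multiset.sum_cons, add_mul]
    have h1 : 2 ^ a - 1 ≤ a * 2 ^ k := by
      rcases Nat.eq_zero_or_pos a with h | h
      · simp [h]
      · have h2 : 2 ^ a ≤ 2 ^ k := Nat.pow_le_pow_right (by norm_num) ha
        have h3 : 2 ^ k ≤ a * 2 ^ k := Nat.le_mul_of_pos_left _ h
        omega
    omega
lemma hZ_coe (m : ℕ) : hZ (m : ℤ) = hh m := by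
  simp [hZ]

lemma hZ_neg {n : ℤ} (h : n < 0) : hZ n = 0 := by simp [hZ, h]

lemma schur_singleton (a : ℕ) : schur [a] = hh a := by
  unfold schur
  rw [← Matrix.det_submatrix_equiv_self (finCongr (by simp : 1 = ([a] : List ℕ).length))]
  rw [Matrix.det_fin_one]
  simp [Matrix.submatrix, hZ]

/-- turn a multiset into a partition list: drop zeros, sort descending -/
def toPart (s : Multiset ℕ) : List ℕ := ((s.filter (0 < ·)).sort (· ≤ ·)).reverse

lemma coe_toPart (s : Multiset ℕ) : (↑(toPart s) : Multiset ℕ) = s.filter (0 < ·) := by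
  simp [toPart]

lemma isPartition_toPart (s : Multiset ℕ) : IsPartition (toPart s) := by
  constructor
  · exact List.pairwise_reverse.mpr
      ((Multiset.pairwise_sort (s.filter (0 < ·)) (· ≤ ·)).imp fun h => h)
  · intro x hx
    have : x ∈ (↑(toPart s) : Multiset ℕ) := by exact_mod_cast hx
    rw [coe_toPart] at this
    exact (Multiset.mem_filter.mp this).2

lemma bounded_toPart {k : ℕ} {s : Multiset ℕ} (hb : ∀ x ∈ s, x ≤ k) :
    KBounded k (toPart s) := by
  intro x hx
  have : x ∈ (↑(toPart s) : Multiset ℕ) := by exact_mod_cast hx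
  rw [coe_toPart] at this
  exact hb x (Multiset.mem_filter.mp this).1

lemma filter_pos_aux (s : Multiset ℕ) :
    s = s.filter (0 < ·) + s.filter (fun x => ¬ 0 < x) := (Multiset.filter_add_not _ s).symm

lemma HP_filter (s : Multiset ℕ) : HP (s.filter (0 < ·)) = HP s := by
  conv_rhs => rw [filter_pos_aux s]
  rw [HP_add]
  have : ∀ x ∈ s.filter (fun x => ¬ 0 < x), x = 0 := by
    intro x hx; have := (Multiset.mem_filter.mp hx).2; omega
  have h1 : HP (s.filter (fun x => ¬ 0 < x)) = 1 := by
    rw [HP]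
    rw [Multiset.prod_eq_one]
    intro f hf
    rcases Multiset.mem_map.mp hf with ⟨x, hx, rfl⟩
    rw [this x hx]; rfl
  rw [h1, mul_one]

lemma sum_filter_pos (s : Multiset ℕ) : (s.filter (0 < ·)).sum = s.sum := by
  conv_rhs => rw [filter_pos_aux s]
  rw [Multiset.sum_add]
  have : (s.filter (fun x => ¬ 0 < x)).sum = 0 := by
    rw [Multiset.sum_eq_zero]
    intro x hx; have := (Multiset.mem_filter.mp hx).2; omega
  omega

lemma wgt_filter_pos (s : Multiset ℕ) : wgt (s.filter (0 < ·)) = wgt s := by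
  conv_rhs => rw [filter_pos_aux s]
  rw [wgt_add]
  have : wgt (s.filter (fun x => ¬ 0 < x)) = 0 := by
    rw [wgt, Multiset.sum_eq_zero]
    intro x hx
    rcases Multiset.mem_map.mp hx with ⟨y, hy, rfl⟩
    have := (Multiset.mem_filter.mp hy).2
    have : y = 0 := by omega
    simp [this]
  omega

lemma hProd_toPart (s : Multiset ℕ) : hProd (toPart s) = HP s := by
  rw [hProd_eq_HP, coe_toPart, HP_filter]

lemma sum_toPart (s : Multiset ℕ) : ((↑(toPart s) : Multiset ℕ)).sum = s.sum := by
  rw [coe_toPart, sum_filter_pos]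

lemma wgt_toPart (s : Multiset ℕ) : wgt ↑(toPart s) = wgt s := by
  rw [coe_toPart, wgt_filter_pos]
lemma get_le_headI {l : List ℕ} (hs : l.Pairwise (· ≥ ·)) (i : Fin l.length) :
    l.get i ≤ l.headI := by
  cases l with
  | nil => exact absurd i.2 (by simp)
  | cons a t =>
    have hmem : (a :: t).get i ∈ a :: t := by
      rw [List.get_eq_getElem]; exact List.getElem_mem i.2
    rcases List.mem_cons.mp hmem with h | h
    · exact le_of_eq h
    · exact (List.pairwise_cons.mp hs).1 _ h

lemma sorted_get_mono {l : List ℕ} (hs : l.Pairwise (· ≥ ·)) {i j : Fin l.length}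
    (hij : i < j) : l.get j ≤ l.get i :=
  List.Pairwise.rel_get_of_lt hs hij

lemma sum_pair_rest {n : ℕ} (i j : Fin n) (hij : i ≠ j) (f : Fin n → ℕ) :
    ∑ x, f x = f i + f j + ∑ x ∈ (Finset.univ.erase i).erase j, f x := by
  have hj : j ∈ Finset.univ.erase i := Finset.mem_erase.mpr ⟨hij.symm, Finset.mem_univ j⟩
  rw [← Finset.add_sum_erase _ f (Finset.mem_univ i), ← Finset.add_sum_erase _ f hj]
  ring

lemma pow_ineq {c d e : ℕ} (hd : 1 ≤ d) (he : 1 ≤ e) :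
    (2 ^ (c + d) - 1) + (2 ^ (c + e) - 1) < (2 ^ (c + d + e) - 1) + (2 ^ c - 1) := by
  have h1 : (1:ℕ) ≤ 2 ^ c := Nat.one_le_two_pow
  have h2 : (2:ℕ) ≤ 2 ^ d := by
    calc (2:ℕ) = 2 ^ 1 := rfl
    _ ≤ 2 ^ d := Nat.pow_le_pow_right (by norm_num) hd
  have h3 : (2:ℕ) ≤ 2 ^ e := by
    calc (2:ℕ) = 2 ^ 1 := rfl
    _ ≤ 2 ^ e := Nat.pow_le_pow_right (by norm_num) he
  have key : 2 ^ d + 2 ^ e < 2 ^ (d + e) + 1 := by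
    have hx : 2 * 2 ^ d ≤ 2 ^ e * 2 ^ d := Nat.mul_le_mul_right _ h3
    have hy : 2 * 2 ^ e ≤ 2 ^ d * 2 ^ e := Nat.mul_le_mul_right _ h2
    have hde : 2 ^ (d + e) = 2 ^ d * 2 ^ e := pow_add 2 d e
    have hcomm : 2 ^ d * 2 ^ e = 2 ^ e * 2 ^ d := Nat.mul_comm _ _
    omega
  have expand : ∀ m : ℕ, 2 ^ (c + m) = 2 ^ c * 2 ^ m := fun m => pow_add 2 c m
  have e1 := expand d; have e2 := expand e
  have e3 : 2 ^ (c + d + e) = 2 ^ c * 2 ^ (d + e) := by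
    rw [add_assoc]; exact expand (d + e)
  have hmul : 2 ^ c * (2 ^ d + 2 ^ e) < 2 ^ c * (2 ^ (d + e) + 1) :=
    mul_lt_mul_of_pos_left key (by positivity)
  have h4 : (1:ℕ) ≤ 2 ^ (c + d) := Nat.one_le_two_pow
  have h5 : (1:ℕ) ≤ 2 ^ (c + e) := Nat.one_le_two_pow
  have h6 : (1:ℕ) ≤ 2 ^ (c + d + e) := Nat.one_le_two_pow
  rw [mul_add, mul_add] at hmul
  omega
/-- weights of determinant terms: non-identity permutations give strictly larger weight -/
lemma perm_wgt_aux (β : List ℕ) (hs : β.Pairwise (· ≥ ·)) :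
    ∀ (d : ℕ) (σ : Equiv.Perm (Fin β.length)),
      (β.length * β.length * β.length + 1) - (∑ i, (i.val) * ((σ i).val)) ≤ d →
      (∀ i : Fin β.length, (0:ℤ) ≤ (β.get i : ℤ) - (i.val : ℤ) + ((σ i).val : ℤ)) →
      σ ≠ 1 →
      (∑ i : Fin β.length, (2 ^ (β.get i) - 1)) <
        ∑ i : Fin β.length, (2 ^ (((β.get i : ℤ) - (i.val : ℤ) + ((σ i).val : ℤ)).toNat) - 1) := by
  have Mbound : ∀ τ : Equiv.Perm (Fin β.length),
      (∑ i, (i.val) * ((τ i).val)) ≤ β.length * β.length * β.length := by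
    intro τ
    calc ∑ i, (i.val) * ((τ i).val)
        ≤ ∑ _i : Fin β.length, β.length * β.length :=
          Finset.sum_le_sum (fun i _ => Nat.mul_le_mul i.2.le (τ i).2.le)
      _ = β.length * (β.length * β.length) := by
          simp [Finset.sum_const, Finset.card_univ]
      _ = β.length * β.length * β.length := by ring
  intro d
  induction d with
  | zero =>
    intro σ hd _ _
    exfalso
    have := Mbound σ
    omega
  | succ d ih =>
    intro σ hd hnn hσ
    -- find an adjacent inversion
    have hexists : ∃ (m : ℕ) (h1 : m + 1 < β.length),
        ((σ ⟨m+1, h1⟩).val) < ((σ ⟨m, Nat.lt_of_succ_lt h1⟩).val) := by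
      by_contra hc
      push_neg at hc
      apply hσ
      have hstrict : ∀ (m : ℕ) (h1 : m + 1 < β.length),
          ((σ ⟨m, Nat.lt_of_succ_lt h1⟩).val) < ((σ ⟨m+1, h1⟩).val) := by
        intro m h1
        have hle := hc m h1
        have hne : σ ⟨m, Nat.lt_of_succ_lt h1⟩ ≠ σ ⟨m+1, h1⟩ := by
          intro he
          have := σ.injective he
          simp [Fin.ext_iff] at this
        have : (σ ⟨m, Nat.lt_of_succ_lt h1⟩).val ≠ (σ ⟨m+1, h1⟩).val := by
          intro hv; exact hne (Fin.ext hv)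
        omega
      have hchain : ∀ (t : ℕ) (x y : Fin β.length), y.val = x.val + t →
          (σ x).val + t ≤ (σ y).val := by
        intro t
        induction t with
        | zero =>
          intro x y hxy
          have : y = x := Fin.ext (by omega)
          subst this
          omega
        | succ t iht =>
          intro x y hxy
          have hmidlt : x.val + t < β.length := by have := y.2; omega
          have h'' : x.val + t + 1 < β.length := by have := y.2; omega
          set mid : Fin β.length := ⟨x.val + t, hmidlt⟩ with hmid
          have ha := iht x mid rfl
          have hb := hstrict (x.val + t) h''
          have e1 : (⟨x.val + t, Nat.lt_of_succ_lt h''⟩ : Fin β.length) = mid :=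
            Fin.ext rfl
          have e2 : (⟨x.val + t + 1, h''⟩ : Fin β.length) = y := Fin.ext (by simp; omega)
          rw [e1, e2] at hb
          omega
      have hle : ∀ x : Fin β.length, x.val ≤ (σ x).val := by
        intro x
        have pos : 0 < β.length := lt_of_le_of_lt (Nat.zero_le _) x.2
        have h0 := hchain x.val ⟨0, pos⟩ x (by simp)
        omega
      have hsum : ∑ x : Fin β.length, (σ x).val = ∑ x : Fin β.length, x.val :=
        Equiv.sum_comp σ (fun x => x.val)
      have heq : ∀ x ∈ Finset.univ, x.val = (σ x).val := by
        rw [← Finset.sum_eq_sum_iff_of_le (fun x _ => hle x)]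
        omega
      ext x
      have := (heq x (Finset.mem_univ x)).symm
      exact this
    obtain ⟨m, h1, hinv⟩ := hexists
    have him : m < β.length := Nat.lt_of_succ_lt h1
    set i : Fin β.length := ⟨m, him⟩ with hi
    set j : Fin β.length := ⟨m+1, h1⟩ with hj
    have hilt : i < j := by rw [hi, hj]; exact Fin.mk_lt_mk.mpr (Nat.lt_succ_self m)
    have hij : i ≠ j := ne_of_lt hilt
    set σ' : Equiv.Perm (Fin β.length) := σ * Equiv.swap i j with hσ'
    have hσ'i : σ' i = σ j := by
      simp [hσ', Equiv.Perm.mul_apply, Equiv.swap_apply_left]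
    have hσ'j : σ' j = σ i := by
      simp [hσ', Equiv.Perm.mul_apply, Equiv.swap_apply_right]
    have hσ'x : ∀ x : Fin β.length, x ≠ i → x ≠ j → σ' x = σ x := by
      intro x hxi hxj
      simp [hσ', Equiv.Perm.mul_apply, Equiv.swap_apply_of_ne_of_ne hxi hxj]
    -- measure increases
    have hMlt : (∑ x, (x.val) * ((σ x).val)) < ∑ x, (x.val) * ((σ' x).val) := by
      rw [sum_pair_rest i j hij (fun x => (x.val) * ((σ x).val)),
          sum_pair_rest i j hij (fun x => (x.val) * ((σ' x).val))]
      have hrest : ∑ x ∈ (Finset.univ.erase i).erase j, (x.val) * ((σ' x).val)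
          = ∑ x ∈ (Finset.univ.erase i).erase j, (x.val) * ((σ x).val) := by
        apply Finset.sum_congr rfl
        intro x hx
        have hxj : x ≠ j := (Finset.mem_erase.mp hx).1
        have hxi : x ≠ i := (Finset.mem_erase.mp (Finset.mem_erase.mp hx).2).1
        rw [hσ'x x hxi hxj]
      rw [hrest, hσ'i, hσ'j]
      have e1 : i.val * (σ j).val + j.val * (σ i).val
          = (m * (σ j).val + m * (σ i).val) + (σ i).val := by
        simp [hi, hj]; ring
      have e2 : i.val * (σ i).val + j.val * (σ j).val
          = (m * (σ i).val + m * (σ j).val) + (σ j).val := by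
        simp [hi, hj]; ring
      omega
    -- weight strictly decreases when we remove the inversion
    have key : (∑ x : Fin β.length,
          (2 ^ (((β.get x : ℤ) - (x.val : ℤ) + ((σ' x).val : ℤ)).toNat) - 1)) <
        ∑ x : Fin β.length,
          (2 ^ (((β.get x : ℤ) - (x.val : ℤ) + ((σ x).val : ℤ)).toNat) - 1) := by
      rw [sum_pair_rest i j hij, sum_pair_rest i j hij
        (fun x => (2 ^ (((β.get x : ℤ) - (x.val : ℤ) + ((σ x).val : ℤ)).toNat) - 1))]
      have hrest : ∑ x ∈ (Finset.univ.erase i).erase j,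
            (2 ^ (((β.get x : ℤ) - (x.val : ℤ) + ((σ' x).val : ℤ)).toNat) - 1)
          = ∑ x ∈ (Finset.univ.erase i).erase j,
            (2 ^ (((β.get x : ℤ) - (x.val : ℤ) + ((σ x).val : ℤ)).toNat) - 1) := by
        apply Finset.sum_congr rfl
        intro x hx
        have hxj : x ≠ j := (Finset.mem_erase.mp hx).1
        have hxi : x ≠ i := (Finset.mem_erase.mp (Finset.mem_erase.mp hx).2).1
        rw [hσ'x x hxi hxj]
      rw [hrest, hσ'i, hσ'j]
      have hab : β.get j ≤ β.get i := sorted_get_mono hs hilt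
      have hc0 : (0:ℤ) ≤ (β.get j : ℤ) - (j.val : ℤ) + ((σ j).val : ℤ) := hnn j
      set a : ℕ := β.get i
      set b : ℕ := β.get j
      set p : ℕ := (σ j).val
      set q : ℕ := (σ i).val
      set c : ℕ := ((b : ℤ) - (j.val : ℤ) + (p : ℤ)).toNat with hcdef
      have hival : i.val = m := rfl
      have hjval : j.val = m + 1 := rfl
      have E1 : ((a : ℤ) - (i.val : ℤ) + (p : ℤ)).toNat = c + (a + 1 - b) := by
        rw [hival]; rw [hjval] at hcdef hc0; omega
      have E2 : ((b : ℤ) - (j.val : ℤ) + (q : ℤ)).toNat = c + (q - p) := by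
        rw [hjval]; rw [hjval] at hcdef hc0; omega
      have E3 : ((a : ℤ) - (i.val : ℤ) + (q : ℤ)).toNat = c + (a + 1 - b) + (q - p) := by
        rw [hival]; rw [hjval] at hcdef hc0; omega
      rw [E1, E2, E3]
      have := pow_ineq (c := c) (d := a + 1 - b) (e := q - p) (by omega) (by omega)
      omega
    -- nonnegativity is preserved
    have hnn' : ∀ x : Fin β.length,
        (0:ℤ) ≤ (β.get x : ℤ) - (x.val : ℤ) + ((σ' x).val : ℤ) := by
      intro x
      by_cases hxi : x = i
      · rw [hxi, hσ'i]
        have hab : β.get j ≤ β.get i := sorted_get_mono hs hilt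
        have hc0 := hnn j
        have hjv : (j.val : ℤ) = (i.val : ℤ) + 1 := by rw [hi, hj]; push_cast; ring
        omega
      · by_cases hxj : x = j
        · rw [hxj, hσ'j]
          have hc0 := hnn j
          have : ((σ j).val : ℤ) ≤ ((σ i).val : ℤ) := by exact_mod_cast hinv.le
          omega
        · rw [hσ'x x hxi hxj]; exact hnn x
    by_cases hσ'1 : σ' = 1
    · -- σ' is the identity : its weight equals the base weight
      have hbase : (∑ x : Fin β.length,
            (2 ^ (((β.get x : ℤ) - (x.val : ℤ) + ((σ' x).val : ℤ)).toNat) - 1))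
          = ∑ x : Fin β.length, (2 ^ (β.get x) - 1) := by
        apply Finset.sum_congr rfl
        intro x _
        rw [hσ'1]
        have : (((β.get x : ℤ) - (x.val : ℤ) + (((1 : Equiv.Perm (Fin β.length)) x).val : ℤ)).toNat)
            = β.get x := by
          simp only [Equiv.Perm.one_apply]
          omega
        rw [this]
      rw [← hbase]
      exact key
    · have hfuel : (β.length * β.length * β.length + 1) - (∑ x, (x.val) * ((σ' x).val)) ≤ d := by
        have := Mbound σ'
        omega
      have := ih σ' hfuel hnn' hσ'1
      exact lt_trans this key
lemma list_map_sum_fn {M : Type} [AddCommMonoid M] (l : List ℕ) (g : ℕ → M) :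
    (l.map g).sum = ∑ x : Fin l.length, g (l.get x) := by
  have h1 : l.map g = List.ofFn (fun x : Fin l.length => g (l.get x)) := by
    conv_lhs => rw [← List.ofFn_get l]
    rw [List.map_ofFn]
    rfl
  rw [h1, List.sum_ofFn]

lemma list_map_prod_fn {M : Type} [CommMonoid M] (l : List ℕ) (g : ℕ → M) :
    (l.map g).prod = ∏ x : Fin l.length, g (l.get x) := by
  have h1 : l.map g = List.ofFn (fun x : Fin l.length => g (l.get x)) := by
    conv_lhs => rw [← List.ofFn_get l]
    rw [List.map_ofFn]
    rfl
  rw [h1, List.prod_ofFn]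

lemma hProd_fn (l : List ℕ) : hProd l = ∏ x : Fin l.length, hh (l.get x) :=
  list_map_prod_fn l hh

lemma wgt_coe_fn (l : List ℕ) : wgt ↑l = ∑ x : Fin l.length, (2 ^ (l.get x) - 1) := by
  rw [wgt, Multiset.map_coe, Multiset.sum_coe]
  exact list_map_sum_fn l _

lemma sum_coe_fn (l : List ℕ) : (↑l : Multiset ℕ).sum = ∑ x : Fin l.length, l.get x := by
  rw [Multiset.sum_coe]
  have := list_map_sum_fn l (id : ℕ → ℕ)
  simpa using this

/-- the "higher terms" error set -/
def ESet (k : ℕ) (t : Multiset ℕ) : Set SymFn :=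
  {f | ∃ s : Multiset ℕ, (∀ x ∈ s, x ≤ k) ∧ s.sum = t.sum ∧ wgt t < wgt s ∧ f = HP s}

lemma schur_expand (k : ℕ) (β : List ℕ) (hp : IsPartition β) (hm : mainHook β ≤ k) :
    schur β - hProd β ∈ Submodule.span ℚ (ESet k ↑β) := by
  classical
  have hdet : schur β = ∑ σ : Equiv.Perm (Fin β.length),
      ((Equiv.Perm.sign σ : ℤ) • ∏ x : Fin β.length,
        hZ ((β.get x : ℤ) - (x.val : ℤ) + ((σ x).val : ℤ))) := by
    rw [schur, Matrix.det_apply]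
    rw [← Equiv.sum_comp (Equiv.inv (Equiv.Perm (Fin β.length)))
      (fun σ : Equiv.Perm (Fin β.length) => Equiv.Perm.sign σ •
        ∏ x : Fin β.length, (Matrix.of fun i j : Fin β.length =>
          hZ (((β.get i : ℕ) : ℤ) - ((i : ℕ) : ℤ) + ((j : ℕ) : ℤ))) (σ x) x)]
    apply Finset.sum_congr rfl
    intro σ _
    simp only [Equiv.inv_apply]
    rw [Units.smul_def, Equiv.Perm.sign_inv]
    congr 1
    calc ∏ x : Fin β.length, (Matrix.of fun i j : Fin β.length =>
            hZ (((β.get i : ℕ) : ℤ) - ((i : ℕ) : ℤ) + ((j : ℕ) : ℤ))) (σ⁻¹ x) x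
        = ∏ x : Fin β.length, (Matrix.of fun i j : Fin β.length =>
            hZ (((β.get i : ℕ) : ℤ) - ((i : ℕ) : ℤ) + ((j : ℕ) : ℤ))) (σ⁻¹ (σ x)) (σ x) :=
          (Equiv.prod_comp σ _).symm
      _ = ∏ x : Fin β.length, hZ ((β.get x : ℤ) - (x.val : ℤ) + ((σ x).val : ℤ)) := by
          apply Finset.prod_congr rfl
          intro x _
          rw [show σ⁻¹ (σ x) = x from σ.symm_apply_apply x]
          rfl
  have hid : ((Equiv.Perm.sign (1 : Equiv.Perm (Fin β.length)) : ℤ) •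
      ∏ x : Fin β.length,
        hZ ((β.get x : ℤ) - (x.val : ℤ) + (((1 : Equiv.Perm (Fin β.length)) x).val : ℤ)))
      = hProd β := by
    rw [Equiv.Perm.sign_one]
    simp only [Equiv.Perm.one_apply, one_smul, Units.val_one]
    rw [hProd_fn]
    apply Finset.prod_congr rfl
    intro x _
    have harg : (β.get x : ℤ) - (x.val : ℤ) + (x.val : ℤ) = (β.get x : ℤ) := by ring
    rw [harg, hZ_coe]
  rw [hdet, ← Finset.add_sum_erase _ _
    (Finset.mem_univ (1 : Equiv.Perm (Fin β.length))), hid, add_sub_cancel_left]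
  apply Submodule.sum_mem
  intro σ hσmem
  have hσ1 : σ ≠ 1 := (Finset.mem_erase.mp hσmem).1
  apply Submodule.smul_of_tower_mem
  by_cases hneg : ∃ x : Fin β.length, (β.get x : ℤ) - (x.val : ℤ) + ((σ x).val : ℤ) < 0
  · obtain ⟨x, hx⟩ := hneg
    have : (∏ x : Fin β.length,
        hZ ((β.get x : ℤ) - (x.val : ℤ) + ((σ x).val : ℤ))) = 0 :=
      Finset.prod_eq_zero (Finset.mem_univ x) (hZ_neg hx)
    rw [this]
    exact Submodule.zero_mem _
  · push_neg at hneg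
    set s : Multiset ℕ := Finset.univ.val.map
      (fun x : Fin β.length => ((β.get x : ℤ) - (x.val : ℤ) + ((σ x).val : ℤ)).toNat) with hs
    have hFσ : (∏ x : Fin β.length,
        hZ ((β.get x : ℤ) - (x.val : ℤ) + ((σ x).val : ℤ))) = HP s := by
      rw [HP, hs, Multiset.map_map]
      rw [Finset.prod_eq_multiset_prod]
      apply congrArg
      apply Multiset.map_congr rfl
      intro x _
      rw [hZ, if_neg (not_lt.mpr (hneg x))]
      rfl
    rw [hFσ]
    apply Submodule.subset_span
    refine ⟨s, ?_, ?_, ?_, rfl⟩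
    · intro y hy
      rw [hs] at hy
      rcases Multiset.mem_map.mp hy with ⟨x, _, rfl⟩
      have h1 : β.get x ≤ β.headI := get_le_headI hp.1 x
      have h2 : (σ x).val < β.length := (σ x).2
      have h3 : 0 < β.length := lt_of_le_of_lt (Nat.zero_le _) x.2
      have hmh : β.headI + β.length - 1 ≤ k := hm
      omega
    · have h1 : s.sum = ∑ x : Fin β.length,
          ((β.get x : ℤ) - (x.val : ℤ) + ((σ x).val : ℤ)).toNat := by
        rw [hs]; rfl
      rw [h1, sum_coe_fn]
      have h2 : ((∑ x : Fin β.length,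
          ((β.get x : ℤ) - (x.val : ℤ) + ((σ x).val : ℤ)).toNat : ℕ) : ℤ)
          = ((∑ x : Fin β.length, β.get x : ℕ) : ℤ) := by
        rw [Nat.cast_sum, Nat.cast_sum]
        have h3 : ∑ x : Fin β.length,
            (((((β.get x : ℤ) - (x.val : ℤ) + ((σ x).val : ℤ)).toNat) : ℕ) : ℤ)
            = ∑ x : Fin β.length, ((β.get x : ℤ) - (x.val : ℤ) + ((σ x).val : ℤ)) := by
          apply Finset.sum_congr rfl
          intro x _
          exact Int.toNat_of_nonneg (hneg x)
        rw [h3]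
        have h4 : ∑ x : Fin β.length, ((σ x).val : ℤ) = ∑ x : Fin β.length, (x.val : ℤ) :=
          Equiv.sum_comp σ (fun x : Fin β.length => (x.val : ℤ))
        rw [Finset.sum_add_distrib, Finset.sum_sub_distrib, h4]
        ring
      exact_mod_cast h2
    · have h1 : wgt s = ∑ x : Fin β.length,
          (2 ^ ((((β.get x : ℤ) - (x.val : ℤ) + ((σ x).val : ℤ)).toNat)) - 1) := by
        rw [wgt, hs, Multiset.map_map]; rfl
      rw [h1, wgt_coe_fn]
      exact perm_wgt_aux β hp.1 (β.length * β.length * β.length + 1) σ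
        (Nat.sub_le _ _) hneg hσ1
lemma part_le_of_mainHook {k : ℕ} {b : List ℕ} (hp : IsPartition b) (hm : mainHook b ≤ k) :
    ∀ x ∈ b, x ≤ k := by
  intro x hx
  cases b with
  | nil => simp at hx
  | cons a t =>
    have hlen : 1 ≤ (a :: t).length := by simp
    have hmh : (a :: t).headI + (a :: t).length - 1 ≤ k := hm
    have hxa : x ≤ a := by
      rcases List.mem_cons.mp hx with h | h
      · omega
      · exact (List.pairwise_cons.mp hp.1).1 x h
    have : (a :: t).headI = a := rfl
    omega

lemma isPartition_tail {a : ℕ} {t : List ℕ} (hp : IsPartition (a :: t)) : IsPartition t :=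
  ⟨(List.pairwise_cons.mp hp.1).2, fun x hx => hp.2 x (List.mem_cons_of_mem a hx)⟩

lemma kSplitAux_props (k : ℕ) : ∀ (fuel : ℕ) (l : List ℕ), l.length ≤ fuel →
    IsPartition l → KBounded k l →
    (∀ b ∈ kSplitAux k fuel l, IsPartition b ∧ mainHook b ≤ k) ∧
    (kSplitAux k fuel l).flatten = l := by
  intro fuel
  induction fuel with
  | zero =>
    intro l hlen hp hb
    have hnil : l = [] := List.eq_nil_of_length_eq_zero (Nat.le_zero.mp hlen)
    subst hnil
    exact ⟨by simp [kSplitAux], by simp [kSplitAux]⟩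
  | succ fuel ih =>
    intro l hlen hp hb
    cases l with
    | nil => exact ⟨by simp [kSplitAux], by simp [kSplitAux]⟩
    | cons a rest =>
      have ha1 : 0 < a := hp.2 a (List.mem_cons_self)
      have hak : a ≤ k := hb a (List.mem_cons_self)
      have hka : 1 ≤ k + 1 - a := by omega
      rw [kSplitAux]
      by_cases hc : (a :: rest).length ≤ k + 1 - a ∨ k + 1 - a = 0
      · rw [if_pos hc]
        have hclen : (a :: rest).length ≤ k + 1 - a := by
          rcases hc with h | h
          · exact h
          · omega
        refine ⟨?_, by simp⟩
        intro b hbmem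
        rw [List.mem_singleton] at hbmem
        subst hbmem
        refine ⟨hp, ?_⟩
        have h0 : (a :: rest).headI = a := rfl
        have h1 : 1 ≤ (a :: rest).length := by simp
        rw [mainHook, h0]
        omega
      · rw [if_neg hc]
        push_neg at hc
        obtain ⟨hlong, hne0⟩ := hc
        have hlong' : k + 1 - a ≤ (a :: rest).length := le_of_lt hlong
        -- the first block
        have hps : IsPartition ((a :: rest).take (k + 1 - a)) := by
          constructor
          · exact hp.1.sublist (List.take_sublist _ _)
          · intro x hx
            exact hp.2 x (List.mem_of_mem_take hx)
        have hds : IsPartition ((a :: rest).drop (k + 1 - a)) := by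
          constructor
          · exact hp.1.sublist (List.drop_sublist _ _)
          · intro x hx
            exact hp.2 x (List.mem_of_mem_drop hx)
        have hdb : KBounded k ((a :: rest).drop (k + 1 - a)) := fun x hx =>
          hb x (List.mem_of_mem_drop hx)
        have hdlen : ((a :: rest).drop (k + 1 - a)).length ≤ fuel := by
          rw [List.length_drop]
          have : (a :: rest).length ≤ fuel + 1 := hlen
          omega
        obtain ⟨ihblocks, ihjoin⟩ := ih ((a :: rest).drop (k + 1 - a)) hdlen hds hdb
        constructor
        · intro b hbmem
          rcases List.mem_cons.mp hbmem with h | h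
          · subst h
            refine ⟨hps, ?_⟩
            obtain ⟨m, hm⟩ : ∃ m, k + 1 - a = m + 1 := ⟨k - a, by omega⟩
            have hhead : ((a :: rest).take (k + 1 - a)).headI = a := by
              rw [hm, List.take_succ_cons]; rfl
            have hlen2 : ((a :: rest).take (k + 1 - a)).length = k + 1 - a := by
              rw [List.length_take]
              omega
            rw [mainHook, hhead, hlen2]
            omega
          · exact ihblocks b h
        · rw [List.flatten_cons, ihjoin]
          exact List.take_append_drop _ _

lemma kSplit_props (k : ℕ) (l : List ℕ) (hp : IsPartition l) (hb : KBounded k l) :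
    (∀ b ∈ kSplit k l, IsPartition b ∧ mainHook b ≤ k) ∧ (kSplit k l).flatten = l :=
  kSplitAux_props k l.length l le_rfl hp hb

lemma kSplitAux_cons (k fuel a : ℕ) (rest : List ℕ) :
    kSplitAux k (fuel + 1) (a :: rest) =
      if (a :: rest).length ≤ k + 1 - a ∨ k + 1 - a = 0 then [a :: rest]
      else (a :: rest).take (k + 1 - a) :: kSplitAux k fuel ((a :: rest).drop (k + 1 - a)) := by
  rw [kSplitAux]

lemma kSplit_cons (k : ℕ) (ν : List ℕ) : kSplit k (k :: ν) = [k] :: kSplit k ν := by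
  have hk1 : k + 1 - k = 1 := by omega
  cases ν with
  | nil =>
    rw [kSplit]
    have h : ((k :: []) : List ℕ).length = 0 + 1 := rfl
    rw [h, kSplitAux_cons, if_pos]
    · rfl
    · left; rw [hk1]; simp
  | cons b t =>
    rw [kSplit]
    have h : (k :: b :: t).length = (b :: t).length + 1 := rfl
    rw [h, kSplitAux_cons, if_neg]
    · rw [hk1]
      rfl
    · rw [hk1]
      push_neg
      refine ⟨by simp, by omega⟩

lemma Gk_nil (k : ℕ) : Gk k [] = 1 := rfl

lemma Gk_cons_k (k : ℕ) (ν : List ℕ) : Gk k (k :: ν) = schur [k] * Gk k ν := by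
  rw [Gk, kSplit_cons, List.map_cons, List.prod_cons, Gk]
lemma ESet_mul_left {k : ℕ} (t1 t2 : Multiset ℕ) (ht1 : ∀ x ∈ t1, x ≤ k) {e : SymFn}
    (he : e ∈ Submodule.span ℚ (ESet k t2)) :
    HP t1 * e ∈ Submodule.span ℚ (ESet k (t1 + t2)) := by
  induction he using Submodule.span_induction with
  | mem f hf =>
    obtain ⟨s, hsb, hss, hsw, rfl⟩ := hf
    rw [← HP_add]
    apply Submodule.subset_span
    refine ⟨t1 + s, ?_, ?_, ?_, rfl⟩
    · intro x hx
      rcases Multiset.mem_add.mp hx with h | h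
      · exact ht1 x h
      · exact hsb x h
    · rw [Multiset.sum_add, Multiset.sum_add, hss]
    · rw [wgt_add, wgt_add]
      omega
  | zero => rw [mul_zero]; exact Submodule.zero_mem _
  | add x y hx hy ihx ihy => rw [mul_add]; exact Submodule.add_mem _ ihx ihy
  | smul a x hx ihx => rw [mul_smul_comm]; exact Submodule.smul_mem _ a ihx

lemma ESet_mul_right {k : ℕ} (t1 t2 : Multiset ℕ) (ht2 : ∀ x ∈ t2, x ≤ k) {e : SymFn}
    (he : e ∈ Submodule.span ℚ (ESet k t1)) :
    e * HP t2 ∈ Submodule.span ℚ (ESet k (t1 + t2)) := by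
  rw [mul_comm, add_comm]
  exact ESet_mul_left t2 t1 ht2 he

lemma ESet_mul_both {k : ℕ} (t1 t2 : Multiset ℕ) {e1 e2 : SymFn}
    (he1 : e1 ∈ Submodule.span ℚ (ESet k t1))
    (he2 : e2 ∈ Submodule.span ℚ (ESet k t2)) :
    e1 * e2 ∈ Submodule.span ℚ (ESet k (t1 + t2)) := by
  induction he1 using Submodule.span_induction with
  | mem f hf =>
    obtain ⟨s1, hs1b, hs1s, hs1w, rfl⟩ := hf
    induction he2 using Submodule.span_induction with
    | mem g hg =>
      obtain ⟨s2, hs2b, hs2s, hs2w, rfl⟩ := hg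
      rw [← HP_add]
      apply Submodule.subset_span
      refine ⟨s1 + s2, ?_, ?_, ?_, rfl⟩
      · intro x hx
        rcases Multiset.mem_add.mp hx with h | h
        · exact hs1b x h
        · exact hs2b x h
      · rw [Multiset.sum_add, Multiset.sum_add, hs1s, hs2s]
      · rw [wgt_add, wgt_add]
        omega
    | zero => rw [mul_zero]; exact Submodule.zero_mem _
    | add x y hx hy ihx ihy => rw [mul_add]; exact Submodule.add_mem _ ihx ihy
    | smul a x hx ihx => rw [mul_smul_comm]; exact Submodule.smul_mem _ a ihx
  | zero => rw [zero_mul]; exact Submodule.zero_mem _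
  | add x y hx hy ihx ihy => rw [add_mul]; exact Submodule.add_mem _ ihx ihy
  | smul a x hx ihx => rw [smul_mul_assoc]; exact Submodule.smul_mem _ a ihx

lemma mem_sum_of_list (L : List (List ℕ)) (x : ℕ)
    (hx : x ∈ (L.map (fun b : List ℕ => (Multiset.ofList b))).sum) : ∃ b ∈ L, x ∈ b := by
  induction L with
  | nil => simp at hx
  | cons b L ih =>
    rw [List.map_cons, List.sum_cons] at hx
    rcases Multiset.mem_add.mp hx with h | h
    · exact ⟨b, List.mem_cons_self, by exact_mod_cast h⟩
    · obtain ⟨c, hc, hxc⟩ := ih h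
      exact ⟨c, List.mem_cons_of_mem b hc, hxc⟩

lemma prod_expand (k : ℕ) : ∀ L : List (List ℕ),
    (∀ b ∈ L, IsPartition b ∧ mainHook b ≤ k) →
    ((L.map schur).prod - HP ((L.map (fun b : List ℕ => (Multiset.ofList b))).sum))
      ∈ Submodule.span ℚ (ESet k ((L.map (fun b : List ℕ => (Multiset.ofList b))).sum)) := by
  intro L
  induction L with
  | nil =>
    intro _
    simp only [List.map_nil, List.prod_nil, List.sum_nil, HP_zero, sub_self]
    exact Submodule.zero_mem _
  | cons b L ih =>
    intro hbl
    have hbp : IsPartition b := (hbl b (List.mem_cons_self)).1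
    have hbm : mainHook b ≤ k := (hbl b (List.mem_cons_self)).2
    have ht1 : ∀ x ∈ (↑b : Multiset ℕ), x ≤ k := by
      intro x hx
      exact part_le_of_mainHook hbp hbm x (by exact_mod_cast hx)
    have ht2 : ∀ x ∈ (L.map (fun b : List ℕ => (Multiset.ofList b))).sum, x ≤ k := by
      intro x hx
      obtain ⟨c, hc, hxc⟩ := mem_sum_of_list L x hx
      have := hbl c (List.mem_cons_of_mem b hc)
      exact part_le_of_mainHook this.1 this.2 x hxc
    have h1 : schur b - HP ↑b ∈ Submodule.span ℚ (ESet k ↑b) := by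
      rw [← hProd_eq_HP]
      exact schur_expand k b hbp hbm
    have h2 := ih (fun c hc => hbl c (List.mem_cons_of_mem b hc))
    simp only [List.map_cons, List.prod_cons, List.sum_cons]
    set X := schur b
    set Y := (L.map schur).prod
    set t1 : Multiset ℕ := ↑b
    set t2 : Multiset ℕ := (L.map (fun b : List ℕ => (Multiset.ofList b))).sum
    have key : X * Y - HP (t1 + t2)
        = (X - HP t1) * HP t2 + (X - HP t1) * (Y - HP t2) + HP t1 * (Y - HP t2) := by
      rw [HP_add]; ring
    rw [key]
    exact Submodule.add_mem _
      (Submodule.add_mem _ (ESet_mul_right t1 t2 ht2 h1) (ESet_mul_both t1 t2 h1 h2))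
      (ESet_mul_left t1 t2 ht1 h2)

lemma coe_flatten (L : List (List ℕ)) :
    ((L.flatten : List ℕ) : Multiset ℕ) = (L.map (fun b : List ℕ => (Multiset.ofList b))).sum := by
  induction L with
  | nil => simp
  | cons b L ih => simp [ih, ← Multiset.coe_add]

lemma Gk_expand (k : ℕ) (μ : List ℕ) (hp : IsPartition μ) (hb : KBounded k μ) :
    Gk k μ - hProd μ ∈ Submodule.span ℚ (ESet k ↑μ) := by
  obtain ⟨hblocks, hjoin⟩ := kSplit_props k μ hp hb
  have h1 := prod_expand k (kSplit k μ) hblocks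
  rw [← coe_flatten, hjoin] at h1
  rw [Gk, hProd_eq_HP]
  exact h1
/-- span of the `h`-products with all indices at most `k` -/
def Hspan (k : ℕ) : Submodule ℚ SymFn :=
  Submodule.span ℚ {f : SymFn | ∃ s : Multiset ℕ, (∀ x ∈ s, x ≤ k) ∧ f = HP s}

/-- span of the `k`-split polynomials over `k`-bounded partitions -/
def Gspan (k : ℕ) : Submodule ℚ SymFn :=
  Submodule.span ℚ {f : SymFn | ∃ l : List ℕ, IsPartition l ∧ KBounded k l ∧ f = Gk k l}

lemma hProd_mem_Gspan (k : ℕ) (μ : List ℕ) (hp : IsPartition μ) (hb : KBounded k μ) :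
    hProd μ ∈ Gspan k := by
  suffices h : ∀ (d : ℕ) (μ : List ℕ), IsPartition μ → KBounded k μ →
      μ.sum * 2 ^ k + 1 - wgt ↑μ ≤ d → hProd μ ∈ Gspan k from
    h (μ.sum * 2 ^ k + 1 - wgt ↑μ) μ hp hb le_rfl
  intro d
  induction d with
  | zero =>
    intro μ hp hb hd
    exfalso
    have hble : ∀ x ∈ (↑μ : Multiset ℕ), x ≤ k := fun x hx => hb x (by exact_mod_cast hx)
    have h1 : wgt ↑μ ≤ (↑μ : Multiset ℕ).sum * 2 ^ k := wgt_le hble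
    have h2 : (↑μ : Multiset ℕ).sum = μ.sum := Multiset.sum_coe μ
    rw [h2] at h1
    omega
  | succ d ih =>
    intro μ hp hb hd
    have hGk : Gk k μ ∈ Gspan k := Submodule.subset_span ⟨μ, hp, hb, rfl⟩
    have herr := Gk_expand k μ hp hb
    have herrG : Gk k μ - hProd μ ∈ Gspan k := by
      refine Submodule.span_le.mpr ?_ herr
      rintro f ⟨s, hsb, hss, hsw, rfl⟩
      have hps := isPartition_toPart s
      have hbs := bounded_toPart hsb
      rw [← hProd_toPart]
      apply ih (toPart s) hps hbs
      have e1 : ((↑(toPart s) : Multiset ℕ)).sum = s.sum := sum_toPart s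
      have e2 : (toPart s).sum = ((↑(toPart s) : Multiset ℕ)).sum := (Multiset.sum_coe _).symm
      have e3 : wgt ↑(toPart s) = wgt s := wgt_toPart s
      have e4 : (↑μ : Multiset ℕ).sum = μ.sum := Multiset.sum_coe μ
      have h1 : wgt s ≤ s.sum * 2 ^ k := wgt_le hsb
      rw [e4] at hss
      rw [e3, e2, e1, hss]
      rw [hss] at h1
      omega
    have hrw : hProd μ = Gk k μ - (Gk k μ - hProd μ) := by ring
    rw [hrw]
    exact Submodule.sub_mem _ hGk herrG

lemma Gspan_le_Hspan (k : ℕ) : Gspan k ≤ Hspan k := by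
  rw [Gspan, Submodule.span_le]
  rintro f ⟨l, hp, hb, rfl⟩
  have h := Gk_expand k l hp hb
  have h2 : Gk k l = hProd l + (Gk k l - hProd l) := by ring
  rw [h2]
  apply Submodule.add_mem
  · apply Submodule.subset_span
    exact ⟨↑l, fun x hx => hb x (by exact_mod_cast hx), hProd_eq_HP l⟩
  · refine Submodule.span_le.mpr ?_ h
    rintro g ⟨s, hsb, _, _, rfl⟩
    exact Submodule.subset_span ⟨s, hsb, rfl⟩

lemma Hspan_le_Gspan (k : ℕ) : Hspan k ≤ Gspan k := by
  rw [Hspan, Submodule.span_le]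
  rintro f ⟨s, hsb, rfl⟩
  rw [← hProd_toPart]
  exact hProd_mem_Gspan k _ (isPartition_toPart s) (bounded_toPart hsb)

lemma hh_mul_Hspan {k a : ℕ} (ha : a ≤ k) {x : SymFn} (hx : x ∈ Hspan k) :
    hh a * x ∈ Hspan k := by
  induction hx using Submodule.span_induction with
  | mem f hf =>
    obtain ⟨s, hsb, rfl⟩ := hf
    rw [← HP_cons]
    apply Submodule.subset_span
    refine ⟨a ::ₘ s, ?_, rfl⟩
    intro x hx
    rcases Multiset.mem_cons.mp hx with h | h
    · omega
    · exact hsb x h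
  | zero => rw [mul_zero]; exact Submodule.zero_mem _
  | add x y hx hy ihx ihy => rw [mul_add]; exact Submodule.add_mem _ ihx ihy
  | smul a x hx ihx => rw [mul_smul_comm]; exact Submodule.smul_mem _ a ihx

lemma T_maps_Gspan {k : ℕ} {T : ℕ → (SymFn →ₗ[ℚ] SymFn)} (hT : ProjOps k T) (j : ℕ)
    {x : SymFn} (hx : x ∈ Gspan k) : T j x ∈ Gspan k := by
  induction hx using Submodule.span_induction with
  | mem f hf =>
    obtain ⟨l, hp, hb, rfl⟩ := hf
    rw [hT j l hp hb]
    split_ifs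
    · exact Submodule.subset_span ⟨l, hp, hb, rfl⟩
    · exact Submodule.zero_mem _
  | zero => rw [map_zero]; exact Submodule.zero_mem _
  | add x y hx hy ihx ihy => rw [map_add]; exact Submodule.add_mem _ ihx ihy
  | smul a x hx ihx => rw [map_smul]; exact Submodule.smul_mem _ a ihx

lemma kSchur_mem_Gspan {k : ℕ} {T : ℕ → (SymFn →ₗ[ℚ] SymFn)} (hT : ProjOps k T) :
    ∀ l : List ℕ, IsPartition l → KBounded k l → kSchurWith T l ∈ Gspan k := by
  intro l
  induction l with
  | nil =>
    intro _ _
    have h1 : kSchurWith T [] = Gk k [] := by rw [Gk_nil]; rfl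
    rw [h1]
    exact Submodule.subset_span ⟨[], ⟨List.Pairwise.nil, by simp⟩, fun x hx => by simp at hx, rfl⟩
  | cons a rest ih =>
    intro hp hb
    have hrest := ih (isPartition_tail hp) (fun x hx => hb x (List.mem_cons_of_mem a hx))
    have ha : a ≤ k := hb a (List.mem_cons_self)
    have h1 : schur [a] * kSchurWith T rest ∈ Gspan k := by
      rw [schur_singleton]
      exact Hspan_le_Gspan k (hh_mul_Hspan ha (Gspan_le_Hspan k hrest))
    exact T_maps_Gspan hT a h1

lemma Tk_fix {k : ℕ} (hk : 1 ≤ k) {T : ℕ → (SymFn →ₗ[ℚ] SymFn)} (hT : ProjOps k T)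
    {x : SymFn} (hx : x ∈ Gspan k) : T k (schur [k] * x) = schur [k] * x := by
  induction hx using Submodule.span_induction with
  | mem f hf =>
    obtain ⟨ν, hp, hb, rfl⟩ := hf
    rw [← Gk_cons_k]
    have hp' : IsPartition (k :: ν) := by
      constructor
      · rw [List.pairwise_cons]
        exact ⟨fun b hb' => hb b hb', hp.1⟩
      · intro x hx
        rcases List.mem_cons.mp hx with h | h
        · omega
        · exact hp.2 x h
    have hb' : KBounded k (k :: ν) := by
      intro x hx
      rcases List.mem_cons.mp hx with h | h
      · omega
      · exact hb x h
    rw [hT k (k :: ν) hp' hb']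
    exact if_pos rfl
  | zero => rw [mul_zero, map_zero]
  | add x y hx hy ihx ihy => rw [mul_add, map_add, ihx, ihy]
  | smul a x hx ihx => rw [mul_smul_comm, map_smul, ihx]
/-- For any `k`-bounded partition `λ`, multiplication by the
Schur function `s_{(k)}` sends the `k`-Schur function of `λ` to the `k`-Schur
function of `(k,λ)`: `s_{(k)} ⋅ s_λ^{(k)} = s_{(k,λ)}^{(k)}`. -/
theorem schur_row_mul_kSchur (k : ℕ) (hk : 1 ≤ k)
    (T : ℕ → (SymFn →ₗ[ℚ] SymFn)) (hT : ProjOps k T)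
    (l : List ℕ) (hl : IsPartition l) (hb : KBounded k l) :
    schur [k] * kSchurWith T l = kSchurWith T (k :: l) := by
  have h1 := kSchur_mem_Gspan hT l hl hb
  have h2 : kSchurWith T (k :: l) = T k (schur [k] * kSchurWith T l) := rfl
  rw [h2, Tk_fix hk hT h1]
end
end

section
/- The images of the homogeneous symmetric functions h_λ, as λ ranges over the k-irreducible partitions, form a basis of the quotient ring Λ^{(k)}/I_k. -/
open scoped BigOperators Classical

noncomputable section

/-- `Λ^{(k)} = ℚ[h₁,…,h_k]` as a subalgebra (subring) of `Λ`. -/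
def LamKAlg (k : ℕ) : Subalgebra ℚ SymFn :=
  Algebra.adjoin ℚ {f : SymFn | ∃ i : ℕ, 1 ≤ i ∧ i ≤ k ∧ f = hh i}

/-- The ideal `I_k` of `Λ^{(k)}` generated by the Schur functions indexed by
the `k`-rectangles `(ℓ^{k+1-ℓ})`, `ℓ = 1,…,k`. -/
def rectIdeal (k : ℕ) : Ideal (LamKAlg k) :=
  Ideal.span {x : LamKAlg k | ∃ l : ℕ, 1 ≤ l ∧ l ≤ k ∧
    (x : SymFn) = schur (List.replicate (k + 1 - l) l)}

/-- A `k`-irreducible partition: a `k`-bounded partition with at most `i`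
parts equal to `k - i` for each `i = 0,…,k-1`. -/
def KIrreducible (k : ℕ) (l : List ℕ) : Prop :=
  IsPartition l ∧ KBounded k l ∧ ∀ i < k, l.count (k - i) ≤ i


open MvPolynomial


namespace St11

variable (k : ℕ)

abbrev SS := MvPolynomial (Fin k) ℚ

def ww (p : Fin k) : ℕ := ((p : ℕ) + 1) * (k - (p : ℕ))

def W (d : Fin k →₀ ℕ) : ℕ := ∑ p : Fin k, d p * ww k p

lemma W_add (d e : Fin k →₀ ℕ) : W k (d + e) = W k d + W k e := by
  simp [W, add_mul, Finset.sum_add_distrib]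

lemma W_single (p : Fin k) (m : ℕ) : W k (Finsupp.single p m) = m * ww k p := by
  simp [W, Finsupp.single_apply, ite_mul, Finset.sum_ite_eq]

def Lead (f : SS k) (m : Fin k →₀ ℕ) : Prop :=
  ∀ d ∈ (f - monomial m 1).support, W k d < W k m

lemma lead_monomial (m : Fin k →₀ ℕ) : Lead k (monomial m 1) m := by
  simp [Lead]

lemma Lead.mul {f g : SS k} {m m' : Fin k →₀ ℕ} (hf : Lead k f m) (hg : Lead k g m') :
    Lead k (f * g) (m + m') := by
  intro d hd
  have hAB : (monomial m (1:ℚ)) * monomial m' 1 = monomial (m + m') 1 := by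
    simp [monomial_mul]
  have hsplit : f * g - monomial (m + m') 1
      = (f - monomial m 1) * g + monomial m 1 * (g - monomial m' 1) := by
    rw [← hAB]; ring
  rw [hsplit] at hd
  have hd' := MvPolynomial.support_add hd
  rw [W_add]
  rcases Finset.mem_union.1 hd' with h | h
  · rcases Finset.mem_add.1 (MvPolynomial.support_mul _ _ h) with ⟨d1, hd1, d2, hd2, rfl⟩
    have h1 : W k d1 < W k m := hf _ hd1
    have h2 : W k d2 ≤ W k m' := by
      have : g = (g - monomial m' 1) + monomial m' 1 := by ring
      have hs : d2 ∈ ((g - monomial m' 1) + monomial m' 1).support := by rw [← this]; exact hd2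
      rcases Finset.mem_union.1 (MvPolynomial.support_add hs) with h | h
      · exact le_of_lt (hg _ h)
      · have := MvPolynomial.support_monomial_subset h
        simp at this
        simp [this]
    rw [W_add]; omega
  · rcases Finset.mem_add.1 (MvPolynomial.support_mul _ _ h) with ⟨d1, hd1, d2, hd2, rfl⟩
    have h1 : d1 = m := by
      have := MvPolynomial.support_monomial_subset hd1
      simpa using this
    have h2 : W k d2 < W k m' := hg _ hd2
    rw [W_add, h1]; omega

lemma lead_one : Lead k 1 0 := by
  have := lead_monomial k 0
  simpa using this

lemma Lead.pow {f : SS k} {m : Fin k →₀ ℕ} (hf : Lead k f m) (j : ℕ) :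
    Lead k (f ^ j) (j • m) := by
  induction j with
  | zero => simpa using lead_one k
  | succ n ih =>
      have := (ih).mul k hf
      -- (n+1) • m = n • m + m
      rw [pow_succ, succ_nsmul]
      exact this

lemma Lead.prod {ι : Type*} (s : Finset ι) (f : ι → SS k) (m : ι → (Fin k →₀ ℕ))
    (h : ∀ i ∈ s, Lead k (f i) (m i)) :
    Lead k (∏ i ∈ s, f i) (∑ i ∈ s, m i) := by
  classical
  induction s using Finset.induction with
  | empty => simpa using lead_one k
  | insert a s hmem ih =>
      rw [Finset.prod_insert hmem, Finset.sum_insert hmem]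
      exact (h a (Finset.mem_insert_self a s)).mul k
        (ih (fun i hi => h i (Finset.mem_insert_of_mem hi)))



/-- `hZS z` is `h_z` inside `ℚ[y₁,…,y_k]`: `0` for `z<0` or `z>k`, `1` for `z=0`,
and the variable `X (z-1)` for `1 ≤ z ≤ k`. -/
def hZS (z : ℤ) : SS k :=
  if h : 1 ≤ z ∧ z ≤ (k : ℤ) then X ⟨z.toNat - 1, by omega⟩ else if z = 0 then 1 else 0

def dz (z : ℤ) : Fin k →₀ ℕ :=
  if h : 1 ≤ z ∧ z ≤ (k : ℤ) then Finsupp.single ⟨z.toNat - 1, by omega⟩ 1 else 0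

lemma hZS_eq_monomial {z : ℤ} (h0 : 0 ≤ z) (hk : z ≤ (k : ℤ)) :
    hZS k z = monomial (dz k z) 1 := by
  by_cases h : 1 ≤ z ∧ z ≤ (k : ℤ)
  · rw [hZS, dz, dif_pos h, dif_pos h]; rfl
  · have hz : z = 0 := by omega
    subst hz
    rw [hZS, dz, dif_neg h, dif_neg h]
    simp

lemma hZS_neg {z : ℤ} (h0 : z < 0) : hZS k z = 0 := by
  rw [hZS, dif_neg (by omega), if_neg (by omega)]


lemma W_zero : W k 0 = 0 := by simp [W]

lemma W_sum {ι : Type*} (s : Finset ι) (f : ι → (Fin k →₀ ℕ)) :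
    W k (∑ i ∈ s, f i) = ∑ i ∈ s, W k (f i) := by
  classical
  induction s using Finset.induction with
  | empty => simp [W_zero]
  | insert a s hmem ih =>
      rw [Finset.sum_insert hmem, Finset.sum_insert hmem, W_add, ih]

lemma W_dz {z : ℤ} (h0 : 0 ≤ z) (hk : z ≤ (k : ℤ)) :
    (W k (dz k z) : ℤ) = z * ((k : ℤ) + 1 - z) := by
  by_cases h : 1 ≤ z ∧ z ≤ (k : ℤ)
  · rw [dz, dif_pos h, W_single]
    have h1 : (((⟨z.toNat - 1, by omega⟩ : Fin k) : ℕ)) = z.toNat - 1 := rfl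
    rw [ww, h1]
    have h2 : z.toNat - 1 + 1 = z.toNat := by omega
    have h3 : k - (z.toNat - 1) = k + 1 - z.toNat := by omega
    rw [h2, h3]
    have h4 : z.toNat ≤ k + 1 := by omega
    push_cast [Nat.cast_sub h4]
    rw [Int.toNat_of_nonneg h0]
    ring
  · have hz : z = 0 := by omega
    subst hz
    rw [dz, dif_neg h, W_zero]
    simp

lemma monomial_prod {ι : Type*} (s : Finset ι) (f : ι → (Fin k →₀ ℕ)) :
    ∏ i ∈ s, (monomial (f i) (1 : ℚ)) = monomial (∑ i ∈ s, f i) 1 := by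
  classical
  induction s using Finset.induction with
  | empty => simp
  | insert a s hmem ih =>
      rw [Finset.prod_insert hmem, Finset.sum_insert hmem, ih, monomial_mul, one_mul]

/-- The Jacobi–Trudi determinant of the `k`-rectangle with part `p+1`,
inside `ℚ[y₁,…,y_k]`. -/
def GS (p : Fin k) : SS k :=
  Matrix.det (Matrix.of fun i j : Fin (k - (p : ℕ)) =>
    hZS k (((p : ℕ) : ℤ) + 1 - ((i : ℕ) : ℤ) + ((j : ℕ) : ℤ)))

def topm (p : Fin k) : Fin k →₀ ℕ := Finsupp.single p (k - (p : ℕ))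

def zf (p : Fin k) (σ : Equiv.Perm (Fin (k - (p : ℕ)))) (i : Fin (k - (p : ℕ))) : ℤ :=
  ((p : ℕ) : ℤ) + 1 - ((σ i : ℕ) : ℤ) + ((i : ℕ) : ℤ)

lemma GS_expand (p : Fin k) :
    GS k p = ∑ σ : Equiv.Perm (Fin (k - (p : ℕ))),
      ((Equiv.Perm.sign σ : ℤ) : SS k) * ∏ i, hZS k (zf k p σ i) := by
  rw [GS, Matrix.det_apply']
  rfl

lemma zf_one (p : Fin k) (i : Fin (k - (p : ℕ))) :
    zf k p 1 i = ((p : ℕ) : ℤ) + 1 := by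
  simp [zf]

lemma dz_A (p : Fin k) : dz k (((p : ℕ) : ℤ) + 1) = Finsupp.single p 1 := by
  have hpk : (p : ℕ) < k := p.2
  rw [dz, dif_pos (by omega)]
  have : (⟨((((p : ℕ) : ℤ)) + 1).toNat - 1, by omega⟩ : Fin k) = p := by
    apply Fin.ext
    simp
  rw [this]

lemma term_one (p : Fin k) :
    ((Equiv.Perm.sign (1 : Equiv.Perm (Fin (k - (p : ℕ)))) : ℤ) : SS k) *
      ∏ i, hZS k (zf k p 1 i) = monomial (topm k p) 1 := by
  have hpk : (p : ℕ) < k := p.2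
  rw [Equiv.Perm.sign_one]
  push_cast
  rw [one_mul]
  have h1 : ∀ i : Fin (k - (p : ℕ)), hZS k (zf k p 1 i) = monomial (Finsupp.single p 1) 1 := by
    intro i
    rw [zf_one, hZS_eq_monomial k (by omega) (by omega), dz_A]
  rw [Finset.prod_congr rfl fun i _ => h1 i, monomial_prod]
  congr 1
  rw [Finset.sum_const, Finset.card_univ]
  simp [topm, Finsupp.smul_single]

lemma lead_GS (p : Fin k) : Lead k (GS k p) (topm k p) := by
  classical
  have hpk : (p : ℕ) < k := p.2
  set m := k - (p : ℕ) with hm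
  set A : ℤ := ((p : ℕ) : ℤ) + 1 with hA
  have hsplit : GS k p - monomial (topm k p) 1 =
      ∑ σ ∈ Finset.univ.erase (1 : Equiv.Perm (Fin m)),
        ((Equiv.Perm.sign σ : ℤ) : SS k) * ∏ i, hZS k (zf k p σ i) := by
    rw [GS_expand, ← Finset.add_sum_erase _ _ (Finset.mem_univ (1 : Equiv.Perm (Fin m))),
      term_one]
    ring
  intro d hd
  rw [hsplit] at hd
  obtain ⟨σ, hσmem, hdσ⟩ := Finset.mem_biUnion.1 (MvPolynomial.support_sum hd)
  have hσ1 : σ ≠ 1 := (Finset.mem_erase.1 hσmem).1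
  by_cases hnn : ∀ i : Fin m, 0 ≤ zf k p σ i
  · have hzk : ∀ i : Fin m, zf k p σ i ≤ (k : ℤ) := by
      intro i
      have h1 : ((i : ℕ)) < m := i.2
      have h2 : (0 : ℤ) ≤ ((σ i : ℕ) : ℤ) := by positivity
      rw [zf]
      omega
    have hprod : ∏ i, hZS k (zf k p σ i) = monomial (∑ i, dz k (zf k p σ i)) 1 := by
      rw [← monomial_prod]
      exact Finset.prod_congr rfl fun i _ => hZS_eq_monomial k (hnn i) (hzk i)
    have hdD : d = ∑ i, dz k (zf k p σ i) := by
      rw [hprod, ← zsmul_eq_mul] at hdσ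
      have := MvPolynomial.support_smul hdσ
      rw [MvPolynomial.support_monomial] at this
      simpa using this
    have hWd : (W k d : ℤ) = ∑ i, zf k p σ i * ((k : ℤ) + 1 - zf k p σ i) := by
      rw [hdD, W_sum]
      push_cast
      exact Finset.sum_congr rfl fun i _ => W_dz k (hnn i) (hzk i)
    have e1 : ∑ i : Fin m, ((σ i : ℕ) : ℤ) = ∑ i : Fin m, ((i : ℕ) : ℤ) :=
      Equiv.sum_comp σ (fun i : Fin m => ((i : ℕ) : ℤ))
    have hsum1 : ∑ i, zf k p σ i = (m : ℤ) * A := by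
      simp only [zf, ← hA]
      rw [Finset.sum_add_distrib, Finset.sum_sub_distrib, e1, Finset.sum_const,
        Finset.card_univ]
      simp
      have hmz : (m : ℤ) = (k : ℤ) - ((p : ℕ) : ℤ) := by omega
      rw [hmz]; ring
    have hsq : ∑ i, (zf k p σ i) ^ 2
        = (m : ℤ) * A ^ 2 + ∑ i : Fin m, (((i : ℕ) : ℤ) - ((σ i : ℕ) : ℤ)) ^ 2 := by
      have hpt : ∀ i : Fin m, (zf k p σ i) ^ 2
          = (A ^ 2 + 2 * A * (((i : ℕ) : ℤ) - ((σ i : ℕ) : ℤ)))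
            + (((i : ℕ) : ℤ) - ((σ i : ℕ) : ℤ)) ^ 2 := by
        intro i; rw [zf, ← hA]; ring
      rw [Finset.sum_congr rfl fun i _ => hpt i, Finset.sum_add_distrib,
        Finset.sum_add_distrib, ← Finset.mul_sum]
      have e0 : ∑ i : Fin m, (((i : ℕ) : ℤ) - ((σ i : ℕ) : ℤ)) = 0 := by
        rw [Finset.sum_sub_distrib, e1]; ring
      rw [e0, Finset.sum_const, Finset.card_univ]
      simp
    have hpos : (1 : ℤ) ≤ ∑ i : Fin m, (((i : ℕ) : ℤ) - ((σ i : ℕ) : ℤ)) ^ 2 := by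
      have hex : ∃ i, σ i ≠ i := by
        by_contra hcon
        push_neg at hcon
        exact hσ1 (Equiv.ext fun i => hcon i)
      obtain ⟨i0, hi0⟩ := hex
      have hne : (((i0 : ℕ) : ℤ) - ((σ i0 : ℕ) : ℤ)) ≠ 0 := by
        have : (σ i0 : ℕ) ≠ (i0 : ℕ) := fun h => hi0 (Fin.ext h)
        omega
      have h1 : (1 : ℤ) ≤ (((i0 : ℕ) : ℤ) - ((σ i0 : ℕ) : ℤ)) ^ 2 := by
        rcases lt_or_gt_of_ne hne with h | h <;> nlinarith
      exact h1.trans (Finset.single_le_sum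
        (f := fun i : Fin m => (((i : ℕ) : ℤ) - ((σ i : ℕ) : ℤ)) ^ 2)
        (fun i _ => sq_nonneg _) (Finset.mem_univ i0))
    have htop : (W k (topm k p) : ℤ) = (m : ℤ) * A * ((k : ℤ) + 1 - A) := by
      rw [topm, W_single, ww]
      have h5 : ((k - (p : ℕ) : ℕ) : ℤ) = (k : ℤ) - ((p : ℕ) : ℤ) := by omega
      have h6 : ((m : ℕ) : ℤ) = (k : ℤ) - ((p : ℕ) : ℤ) := by omega
      push_cast [h5, h6]
      rw [hA]
      ring
    have hlt : (W k d : ℤ) < (W k (topm k p) : ℤ) := by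
      rw [hWd, htop]
      have expand : ∑ i, zf k p σ i * ((k : ℤ) + 1 - zf k p σ i)
          = ((k : ℤ) + 1) * (∑ i, zf k p σ i) - ∑ i, (zf k p σ i) ^ 2 := by
        rw [Finset.mul_sum, ← Finset.sum_sub_distrib]
        exact Finset.sum_congr rfl fun i _ => by ring
      rw [expand, hsum1, hsq]
      nlinarith [hpos]
    exact_mod_cast hlt
  · push_neg at hnn
    obtain ⟨i0, hi0⟩ := hnn
    have hzero : ∏ i, hZS k (zf k p σ i) = 0 :=
      Finset.prod_eq_zero (Finset.mem_univ i0) (hZS_neg k (by omega))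
    rw [hzero, mul_zero] at hdσ
    simp at hdσ


/-! ### The triangular family `vB` -/

def quo (d : Fin k →₀ ℕ) (p : Fin k) : ℕ := d p / (k - (p : ℕ))

def rem (d : Fin k →₀ ℕ) : Fin k →₀ ℕ :=
  Finsupp.equivFunOnFinite.symm (fun p => d p % (k - (p : ℕ)))

def vB (d : Fin k →₀ ℕ) : SS k := (∏ p, GS k p ^ quo k d p) * monomial (rem k d) 1

def Std (d : Fin k →₀ ℕ) : Prop := ∀ p : Fin k, d p < k - (p : ℕ)

lemma rem_apply (d : Fin k →₀ ℕ) (p : Fin k) : rem k d p = d p % (k - (p : ℕ)) := by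
  simp [rem]

lemma decomp (d : Fin k →₀ ℕ) : (∑ p, quo k d p • topm k p) + rem k d = d := by
  ext q
  rw [Finsupp.add_apply, Finsupp.finset_sum_apply, rem_apply]
  have h1 : ∀ p : Fin k, (quo k d p • topm k p) q
      = quo k d p * (if p = q then k - (p : ℕ) else 0) := by
    intro p
    rw [Finsupp.smul_apply, topm, Finsupp.single_apply, smul_eq_mul]
  rw [Finset.sum_congr rfl fun p _ => h1 p]
  simp only [mul_ite, mul_zero]
  rw [Finset.sum_ite_eq', if_pos (Finset.mem_univ q), quo, mul_comm]
  exact Nat.div_add_mod _ _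

lemma lead_vB (d : Fin k →₀ ℕ) : Lead k (vB k d) d := by
  have h1 : Lead k (∏ p, GS k p ^ quo k d p) (∑ p, quo k d p • topm k p) :=
    Lead.prod k _ _ _ (fun p _ => (lead_GS k p).pow k (quo k d p))
  have h2 := h1.mul k (lead_monomial k (rem k d))
  rw [decomp] at h2
  exact h2

lemma quo_add_single (d : Fin k →₀ ℕ) (p q : Fin k) :
    quo k (d + Finsupp.single p (k - (p : ℕ))) q = quo k d q + (if q = p then 1 else 0) := by
  have hp : 0 < k - (p : ℕ) := by have := p.2; omega
  rw [quo, quo, Finsupp.add_apply, Finsupp.single_apply]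
  by_cases h : q = p
  · subst h
    rw [if_pos rfl, if_pos rfl, Nat.add_div_right _ hp]
  · rw [if_neg (fun hh => h hh.symm), if_neg h, add_zero, add_zero]

lemma rem_add_single (d : Fin k →₀ ℕ) (p : Fin k) :
    rem k (d + Finsupp.single p (k - (p : ℕ))) = rem k d := by
  ext q
  rw [rem_apply, rem_apply, Finsupp.add_apply, Finsupp.single_apply]
  by_cases h : q = p
  · subst h
    rw [if_pos rfl, Nat.add_mod_right]
  · rw [if_neg (fun hh => h hh.symm), add_zero]

lemma vB_mul_GS (d : Fin k →₀ ℕ) (p : Fin k) :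
    vB k d * GS k p = vB k (d + Finsupp.single p (k - (p : ℕ))) := by
  rw [vB, vB, rem_add_single]
  have h1 : ∏ q, GS k q ^ quo k (d + Finsupp.single p (k - (p : ℕ))) q
      = (∏ q, GS k q ^ quo k d q) * GS k p := by
    rw [Finset.prod_congr rfl fun q _ => by rw [quo_add_single, pow_add]]
    rw [Finset.prod_mul_distrib]
    congr 1
    have : ∀ q : Fin k, GS k q ^ (if q = p then 1 else 0) = if q = p then GS k q else 1 := by
      intro q; split <;> simp
    rw [Finset.prod_congr rfl fun q _ => this q, Finset.prod_ite_eq',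
      if_pos (Finset.mem_univ p)]
  rw [h1]
  ring

/-! ### The submodules -/

def Bstd : Submodule ℚ (SS k) :=
  Submodule.span ℚ {f : SS k | ∃ d, Std k d ∧ f = monomial d 1}

def UU : Submodule ℚ (SS k) :=
  Submodule.span ℚ {f : SS k | ∃ d, ¬ Std k d ∧ f = vB k d}

def JJ : Ideal (SS k) := Ideal.span (Set.range (GS k))

lemma nonstd_add_single (d : Fin k →₀ ℕ) (p : Fin k) :
    ¬ Std k (d + Finsupp.single p (k - (p : ℕ))) := by
  intro h
  have := h p
  rw [Finsupp.add_apply, Finsupp.single_apply, if_pos rfl] at this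
  omega

lemma monomial_mul_GS_mem (N : ℕ) : ∀ d : Fin k →₀ ℕ, W k d < N →
    ∀ p : Fin k, monomial d (1 : ℚ) * GS k p ∈ UU k := by
  induction N with
  | zero => intro d h; omega
  | succ N ih =>
      intro d hd p
      have hlead := lead_vB k d
      have hkey : monomial d (1 : ℚ) * GS k p
          = vB k (d + Finsupp.single p (k - (p : ℕ))) - (vB k d - monomial d 1) * GS k p := by
        rw [← vB_mul_GS]; ring
      rw [hkey]
      apply sub_mem
      · exact Submodule.subset_span ⟨_, nonstd_add_single k d p, rfl⟩
      · have hexp : (vB k d - monomial d 1) * GS k p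
            = ∑ e ∈ (vB k d - monomial d 1).support,
                MvPolynomial.coeff e (vB k d - monomial d 1) • (monomial e 1 * GS k p) := by
          conv_lhs => rw [MvPolynomial.as_sum (vB k d - monomial d 1)]
          rw [Finset.sum_mul]
          exact Finset.sum_congr rfl fun e _ => by
            rw [← smul_mul_assoc, MvPolynomial.smul_monomial, smul_eq_mul, mul_one]
        rw [hexp]
        apply Submodule.sum_mem
        intro e he
        have hWe : W k e < W k d := hlead e he
        exact Submodule.smul_mem _ _ (ih e (by omega) p)

lemma mul_GS_mem (f : SS k) (p : Fin k) : f * GS k p ∈ UU k := by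
  have hrw : f * GS k p = ∑ e ∈ f.support, monomial e (MvPolynomial.coeff e f) * GS k p := by
    conv_lhs => rw [MvPolynomial.as_sum f]
    rw [Finset.sum_mul]
  rw [hrw]
  apply Submodule.sum_mem
  intro e he
  have h1 : monomial e (MvPolynomial.coeff e f) * GS k p
      = MvPolynomial.coeff e f • (monomial e 1 * GS k p) := by
    rw [← smul_mul_assoc, MvPolynomial.smul_monomial, smul_eq_mul, mul_one]
  rw [h1]
  exact Submodule.smul_mem _ _ (monomial_mul_GS_mem k (W k e + 1) e (by omega) p)

lemma JJ_le_UU : ∀ x ∈ JJ k, x ∈ UU k := by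
  intro x hx
  rw [JJ, Ideal.span] at hx
  rw [Finsupp.mem_span_range_iff_exists_finsupp] at hx
  obtain ⟨c, rfl⟩ := hx
  rw [Finsupp.sum]
  apply Submodule.sum_mem
  intro p _
  rw [smul_eq_mul]
  exact mul_GS_mem k (c p) p

lemma vB_nonstd_mem_JJ (d : Fin k →₀ ℕ) (h : ¬ Std k d) : vB k d ∈ JJ k := by
  rw [Std] at h
  push_neg at h
  obtain ⟨p, hp⟩ := h
  have hdec : d = (d - Finsupp.single p (k - (p : ℕ))) + Finsupp.single p (k - (p : ℕ)) := by
    ext q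
    rw [Finsupp.add_apply, Finsupp.tsub_apply, Finsupp.single_apply]
    by_cases hq : p = q
    · rw [if_pos hq]; subst hq; omega
    · rw [if_neg hq]; omega
  rw [hdec, ← vB_mul_GS]
  exact Ideal.mul_mem_left _ _ (Ideal.subset_span ⟨p, rfl⟩)

lemma UU_le_JJ : ∀ x ∈ UU k, x ∈ JJ k := by
  intro x hx
  have : UU k ≤ (JJ k).restrictScalars ℚ := by
    rw [UU]
    apply Submodule.span_le.2
    rintro f ⟨d, hd, rfl⟩
    exact vB_nonstd_mem_JJ k d hd
  exact this hx

lemma vB_linearIndependent : LinearIndependent ℚ (vB k) := by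
  rw [linearIndependent_iff']
  intro s g hsum i hi
  by_contra hgi
  have ht : (s.filter (fun d => g d ≠ 0)).Nonempty := ⟨i, by simp [hi, hgi]⟩
  obtain ⟨d0, hd0t, hmax⟩ := Finset.exists_max_image _ (fun d => W k d) ht
  rw [Finset.mem_filter] at hd0t
  have hcoeff : ∀ d ∈ s, g d * MvPolynomial.coeff d0 (vB k d)
      = if d = d0 then g d0 else 0 := by
    intro d hds
    by_cases hgd : g d = 0
    · rw [hgd, zero_mul]
      split
      · next h => rw [h] at hgd; rw [hgd]
      · rfl
    · have hWle : W k d ≤ W k d0 := hmax d (Finset.mem_filter.2 ⟨hds, hgd⟩)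
      have hsplitc : MvPolynomial.coeff d0 (vB k d)
          = MvPolynomial.coeff d0 (monomial d (1:ℚ)) + MvPolynomial.coeff d0 (vB k d - monomial d 1) := by
        rw [← MvPolynomial.coeff_add]
        congr 1
        ring
      by_cases hdd : d = d0
      · subst hdd
        rw [if_pos rfl, hsplitc, MvPolynomial.coeff_monomial, if_pos rfl]
        have h2 : MvPolynomial.coeff d (vB k d - monomial d 1) = 0 := by
          by_contra hc
          have := lead_vB k d d (MvPolynomial.mem_support_iff.2 hc)
          omega
        rw [h2, add_zero, mul_one]
      · rw [if_neg hdd, hsplitc, MvPolynomial.coeff_monomial, if_neg hdd]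
        have h2 : MvPolynomial.coeff d0 (vB k d - monomial d 1) = 0 := by
          by_contra hc
          have := lead_vB k d d0 (MvPolynomial.mem_support_iff.2 hc)
          omega
        rw [h2, add_zero, mul_zero]
  have : MvPolynomial.coeff d0 (∑ d ∈ s, g d • vB k d) = g d0 := by
    rw [MvPolynomial.coeff_sum]
    have : ∀ d ∈ s, MvPolynomial.coeff d0 (g d • vB k d) = if d = d0 then g d0 else 0 := by
      intro d hds
      rw [MvPolynomial.coeff_smul, smul_eq_mul, hcoeff d hds]
    rw [Finset.sum_congr rfl this, Finset.sum_ite_eq', if_pos hd0t.1]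
  rw [hsum] at this
  simp only [MvPolynomial.coeff_zero] at this
  exact hd0t.2 this.symm


/-! ### The quotient ring `SS k ⧸ JJ k` -/

lemma vB_std (d : Fin k →₀ ℕ) (h : Std k d) : vB k d = monomial d 1 := by
  have h1 : ∀ p : Fin k, quo k d p = 0 := fun p => Nat.div_eq_of_lt (h p)
  have h2 : rem k d = d := by
    ext q
    rw [rem_apply]
    exact Nat.mod_eq_of_lt (h q)
  rw [vB, h2]
  rw [Finset.prod_congr rfl fun p _ => by rw [h1 p, pow_zero]]
  simp

lemma W_topm (p : Fin k) : W k (topm k p) = (k - (p : ℕ)) * ww k p := by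
  rw [topm, W_single]

lemma mk_smul (c : ℚ) (f : SS k) :
    Ideal.Quotient.mk (JJ k) (c • f) = c • Ideal.Quotient.mk (JJ k) f := by
  rw [← Ideal.Quotient.mkₐ_eq_mk ℚ, map_smul]

lemma mk_monomial_mem_span (N : ℕ) : ∀ d : Fin k →₀ ℕ, W k d < N →
    Ideal.Quotient.mk (JJ k) (monomial d 1) ∈
      Submodule.span ℚ (Set.range fun a : {d : Fin k →₀ ℕ // Std k d} =>
        Ideal.Quotient.mk (JJ k) (monomial a.1 1)) := by
  induction N with
  | zero => intro d h; omega
  | succ N ih =>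
      intro d hd
      by_cases hstd : Std k d
      · exact Submodule.subset_span ⟨⟨d, hstd⟩, rfl⟩
      · have hex : ∃ p : Fin k, k - (p : ℕ) ≤ d p := by
          rw [Std] at hstd; push_neg at hstd; exact hstd
        obtain ⟨p, hp⟩ := hex
        have hwwpos : 0 < ww k p := by
          have := p.2
          rw [ww]
          exact Nat.mul_pos (by omega) (by omega)
        have hdec : d = (d - Finsupp.single p (k - (p : ℕ))) + topm k p := by
          ext q
          rw [Finsupp.add_apply, Finsupp.tsub_apply, topm, Finsupp.single_apply]
          by_cases hq : p = q
          · rw [if_pos hq]; subst hq; omega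
          · rw [if_neg hq]; omega
        set d' := d - Finsupp.single p (k - (p : ℕ)) with hd'
        have hWd : W k d = W k d' + (k - (p : ℕ)) * ww k p := by
          conv_lhs => rw [hdec]
          rw [W_add, W_topm]
        set r := GS k p - monomial (topm k p) 1 with hr
        have hkey : monomial d (1 : ℚ) = monomial d' 1 * GS k p - monomial d' 1 * r := by
          rw [hr, mul_sub, sub_sub_cancel, monomial_mul, mul_one]
          conv_lhs => rw [hdec]
        have hJmem : monomial d' (1 : ℚ) * GS k p ∈ JJ k :=
          Ideal.mul_mem_left _ _ (Ideal.subset_span ⟨p, rfl⟩)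
        have hmk : Ideal.Quotient.mk (JJ k) (monomial d 1)
            = - Ideal.Quotient.mk (JJ k) (monomial d' 1 * r) := by
          rw [hkey, map_sub, Ideal.Quotient.eq_zero_iff_mem.2 hJmem, zero_sub]
        rw [hmk]
        apply Submodule.neg_mem
        have hexp : monomial d' (1 : ℚ) * r
            = ∑ e ∈ r.support, MvPolynomial.coeff e r • monomial (d' + e) 1 := by
          conv_lhs => rw [MvPolynomial.as_sum r]
          rw [Finset.mul_sum]
          refine Finset.sum_congr rfl fun e _ => ?_
          rw [MvPolynomial.smul_monomial, smul_eq_mul, mul_one, monomial_mul, one_mul]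
        rw [hexp, map_sum]
        apply Submodule.sum_mem
        intro e he
        have hWe : W k e < (k - (p : ℕ)) * ww k p := by
          have := lead_GS k p e he
          rwa [W_topm] at this
        have hWde : W k (d' + e) < N := by
          rw [W_add]; omega
        rw [mk_smul]
        exact Submodule.smul_mem _ _ (ih _ hWde)

lemma quot_span_top :
    Submodule.span ℚ (Set.range fun a : {d : Fin k →₀ ℕ // Std k d} =>
      Ideal.Quotient.mk (JJ k) (monomial a.1 1)) = ⊤ := by
  rw [eq_top_iff]
  rintro x -
  obtain ⟨f, rfl⟩ := Ideal.Quotient.mk_surjective x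
  have hrw : Ideal.Quotient.mk (JJ k) f
      = ∑ e ∈ f.support, MvPolynomial.coeff e f • Ideal.Quotient.mk (JJ k) (monomial e 1) := by
    conv_lhs => rw [MvPolynomial.as_sum f]
    rw [map_sum]
    refine Finset.sum_congr rfl fun e _ => ?_
    have : monomial e (MvPolynomial.coeff e f) = MvPolynomial.coeff e f • monomial e (1:ℚ) := by
      rw [MvPolynomial.smul_monomial, smul_eq_mul, mul_one]
    rw [this, mk_smul]
  rw [hrw]
  apply Submodule.sum_mem
  intro e _
  exact Submodule.smul_mem _ _ (mk_monomial_mem_span k (W k e + 1) e (by omega))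

lemma quot_linearIndependent :
    LinearIndependent ℚ (fun a : {d : Fin k →₀ ℕ // Std k d} =>
      Ideal.Quotient.mk (JJ k) (monomial a.1 1)) := by
  rw [linearIndependent_iff']
  intro s g hsum i hi
  have hvB : ∀ a : {d : Fin k →₀ ℕ // Std k d}, vB k a.1 = monomial a.1 1 :=
    fun a => vB_std k a.1 a.2
  have hsum0 : ∑ a ∈ s, g a • vB k a.1 = 0 := by
    have hmem : ∑ a ∈ s, g a • vB k a.1 ∈ JJ k := by
      rw [← Ideal.Quotient.eq_zero_iff_mem]
      have : Ideal.Quotient.mk (JJ k) (∑ a ∈ s, g a • vB k a.1)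
          = ∑ a ∈ s, g a • Ideal.Quotient.mk (JJ k) (monomial a.1 1) := by
        rw [map_sum]
        exact Finset.sum_congr rfl fun a _ => by rw [hvB, mk_smul]
      rw [this, hsum]
    have hU : ∑ a ∈ s, g a • vB k a.1 ∈ UU k := JJ_le_UU k _ hmem
    have hB : ∑ a ∈ s, g a • vB k a.1
        ∈ Submodule.span ℚ (vB k '' {d : Fin k →₀ ℕ | Std k d}) := by
      apply Submodule.sum_mem
      intro a _
      exact Submodule.smul_mem _ _ (Submodule.subset_span ⟨a.1, a.2, rfl⟩)
    have hUU : UU k = Submodule.span ℚ (vB k '' {d : Fin k →₀ ℕ | ¬ Std k d}) := by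
      rw [UU]
      congr 1
      ext f
      constructor
      · rintro ⟨d, hd, rfl⟩; exact ⟨d, hd, rfl⟩
      · rintro ⟨d, hd, rfl⟩; exact ⟨d, hd, rfl⟩
    have hdisj := (vB_linearIndependent k).disjoint_span_image
      (s := {d : Fin k →₀ ℕ | ¬ Std k d}) (t := {d : Fin k →₀ ℕ | Std k d})
      (by simp [Set.disjoint_left])
    rw [hUU] at hU
    exact Submodule.disjoint_def.1 hdisj _ hU hB
  have li2 : LinearIndependent ℚ (fun a : {d : Fin k →₀ ℕ // Std k d} => vB k a.1) :=
    (vB_linearIndependent k).comp _ Subtype.val_injective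
  exact linearIndependent_iff'.1 li2 s g hsum0 i hi

end St11


-- TRANSFER
namespace St11

lemma hh_succ (n : ℕ) : hh (n + 1) = MvPolynomial.X n := rfl

def iot (k : ℕ) : MvPolynomial (Fin k) ℚ →ₐ[ℚ] SymFn := MvPolynomial.rename Fin.val

lemma iot_injective (k : ℕ) : Function.Injective (iot k) :=
  MvPolynomial.rename_injective _ Fin.val_injective

lemma iot_range (k : ℕ) : (iot k).range = LamKAlg k := by
  have h1 : iot k = MvPolynomial.aeval (fun p : Fin k => (MvPolynomial.X (p : ℕ) : SymFn)) := by
    apply MvPolynomial.algHom_ext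
    intro p
    simp [iot]
  rw [h1, ← Algebra.adjoin_range_eq_range_aeval, LamKAlg]
  congr 1
  ext f
  constructor
  · rintro ⟨p, rfl⟩
    exact ⟨(p : ℕ) + 1, by omega, by have := p.2; omega, (hh_succ _).symm⟩
  · rintro ⟨i, hi1, hi2, rfl⟩
    refine ⟨⟨i - 1, by omega⟩, ?_⟩
    show MvPolynomial.X ((⟨i - 1, by omega⟩ : Fin k) : ℕ) = hh i
    rw [show ((⟨i - 1, by omega⟩ : Fin k) : ℕ) = i - 1 from rfl, ← hh_succ]
    congr 1
    omega

def eqv (k : ℕ) : MvPolynomial (Fin k) ℚ ≃ₐ[ℚ] LamKAlg k :=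
  (AlgEquiv.ofInjective (iot k) (iot_injective k)).trans
    (Subalgebra.equivOfEq _ _ (iot_range k))

lemma eqv_coe (k : ℕ) (f : MvPolynomial (Fin k) ℚ) :
    ((eqv k f : LamKAlg k) : SymFn) = iot k f := by
  simp [eqv, Subalgebra.equivOfEq_apply, AlgEquiv.ofInjective_apply]

lemma iot_hZS {k : ℕ} (z : ℤ) (hz : z ≤ (k : ℤ)) : iot k (hZS k z) = hZ z := by
  rw [hZS, hZ]
  by_cases h : 1 ≤ z ∧ z ≤ (k : ℤ)
  · rw [dif_pos h, if_neg (by omega)]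
    rw [iot, MvPolynomial.rename_X]
    rw [show ((⟨z.toNat - 1, by omega⟩ : Fin k) : ℕ) = z.toNat - 1 from rfl, ← hh_succ]
    congr 1
    omega
  · rw [dif_neg h]
    by_cases h0 : z = 0
    · rw [if_pos h0, if_neg (by omega)]
      subst h0
      rw [map_one]
      rfl
    · rw [if_neg h0, if_pos (by omega)]
      rw [map_zero]

lemma schur_rect (k : ℕ) (p : Fin k) :
    schur (List.replicate (k - (p : ℕ)) ((p : ℕ) + 1)) = iot k (GS k p) := by
  have hpk : (p : ℕ) < k := p.2
  have hR : iot k (GS k p) = Matrix.det (Matrix.of fun i j : Fin (k - (p : ℕ)) =>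
      hZ (((p : ℕ) : ℤ) + 1 - ((i : ℕ) : ℤ) + ((j : ℕ) : ℤ))) := by
    rw [GS]
    have hdet : iot k (Matrix.det (Matrix.of fun i j : Fin (k - (p : ℕ)) =>
        hZS k (((p : ℕ) : ℤ) + 1 - ((i : ℕ) : ℤ) + ((j : ℕ) : ℤ))))
        = ((Matrix.of fun i j : Fin (k - (p : ℕ)) =>
            hZS k (((p : ℕ) : ℤ) + 1 - ((i : ℕ) : ℤ) + ((j : ℕ) : ℤ))).map (iot k)).det := by
      have h0 := RingHom.map_det (iot k).toRingHom (Matrix.of fun i j : Fin (k - (p : ℕ)) =>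
        hZS k (((p : ℕ) : ℤ) + 1 - ((i : ℕ) : ℤ) + ((j : ℕ) : ℤ)))
      simpa [RingHom.mapMatrix_apply] using h0
    rw [hdet]
    congr 1
    ext i j
    have hj := j.2
    simp only [Matrix.map_apply, Matrix.of_apply]
    rw [iot_hZS _ (by omega)]
  have hlen : (List.replicate (k - (p : ℕ)) ((p : ℕ) + 1)).length = k - (p : ℕ) := by simp
  have hL : schur (List.replicate (k - (p : ℕ)) ((p : ℕ) + 1))
      = Matrix.det (Matrix.of fun i j : Fin (k - (p : ℕ)) =>
        hZ (((p : ℕ) : ℤ) + 1 - ((i : ℕ) : ℤ) + ((j : ℕ) : ℤ))) := by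
    rw [schur, ← Matrix.det_submatrix_equiv_self (finCongr hlen.symm)]
    congr 1
    ext i j
    simp [Matrix.submatrix_apply, Matrix.of_apply, List.getElem_replicate]
  rw [hL, hR]

lemma schur_replicate (k l : ℕ) (h1 : 1 ≤ l) (h2 : l ≤ k) :
    schur (List.replicate (k + 1 - l) l) = iot k (GS k ⟨l - 1, by omega⟩) := by
  have h3 : k + 1 - l = k - ((⟨l - 1, by omega⟩ : Fin k) : ℕ) := by
    rw [show ((⟨l - 1, by omega⟩ : Fin k) : ℕ) = l - 1 from rfl]
    omega
  have h4 : l = ((⟨l - 1, by omega⟩ : Fin k) : ℕ) + 1 := by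
    rw [show ((⟨l - 1, by omega⟩ : Fin k) : ℕ) = l - 1 from rfl]
    omega
  have h5 : List.replicate (k + 1 - l) l
      = List.replicate (k - ((⟨l - 1, by omega⟩ : Fin k) : ℕ)) (((⟨l - 1, by omega⟩ : Fin k) : ℕ) + 1) := by
    rw [show ((⟨l - 1, by omega⟩ : Fin k) : ℕ) = l - 1 from rfl]
    congr 1 <;> omega
  rw [h5]
  exact schur_rect k _

lemma rect_map (k : ℕ) :
    rectIdeal k = Ideal.map (eqv k : MvPolynomial (Fin k) ℚ →+* LamKAlg k) (JJ k) := by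
  rw [rectIdeal, JJ, Ideal.map_span]
  congr 1
  ext x
  simp only [Set.mem_setOf_eq, Set.mem_image, Set.mem_range]
  constructor
  · rintro ⟨l, hl1, hl2, hx⟩
    refine ⟨GS k ⟨l - 1, by omega⟩, ⟨⟨l - 1, by omega⟩, rfl⟩, ?_⟩
    apply Subtype.ext
    rw [show ((eqv k : MvPolynomial (Fin k) ℚ →+* LamKAlg k) (GS k ⟨l - 1, by omega⟩) : SymFn)
        = ((eqv k (GS k ⟨l - 1, by omega⟩) : LamKAlg k) : SymFn) from rfl]
    rw [eqv_coe, ← schur_replicate k l hl1 hl2, hx]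
  · rintro ⟨g, ⟨p, rfl⟩, rfl⟩
    have hpk : (p : ℕ) < k := p.2
    refine ⟨(p : ℕ) + 1, by omega, by omega, ?_⟩
    rw [show ((eqv k : MvPolynomial (Fin k) ℚ →+* LamKAlg k) (GS k p) : SymFn)
        = ((eqv k (GS k p) : LamKAlg k) : SymFn) from rfl]
    rw [eqv_coe, schur_replicate k ((p : ℕ) + 1) (by omega) (by omega)]
    congr 2

def QE (k : ℕ) : (MvPolynomial (Fin k) ℚ ⧸ JJ k) ≃ₐ[ℚ] (LamKAlg k ⧸ rectIdeal k) :=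
  Ideal.quotientEquivAlg (JJ k) (rectIdeal k) (eqv k) (rect_map k)

lemma QE_mk (k : ℕ) (f : MvPolynomial (Fin k) ℚ) :
    QE k (Ideal.Quotient.mk (JJ k) f) = Ideal.Quotient.mk (rectIdeal k) (eqv k f) := rfl

/-! ### Dictionary between `k`-irreducible partitions and standard exponents -/

def cnt (k : ℕ) (l : List ℕ) : Fin k →₀ ℕ :=
  Finsupp.equivFunOnFinite.symm (fun p => l.count ((p : ℕ) + 1))

lemma cnt_apply (k : ℕ) (l : List ℕ) (p : Fin k) : cnt k l p = l.count ((p : ℕ) + 1) := by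
  simp [cnt]

lemma hProd_eq (k : ℕ) (l : List ℕ) (h : ∀ x ∈ l, 1 ≤ x ∧ x ≤ k) :
    hProd l = ∏ p : Fin k, hh ((p : ℕ) + 1) ^ l.count ((p : ℕ) + 1) := by
  induction l with
  | nil => simp [hProd]
  | cons a t ih =>
      have ha := h a List.mem_cons_self
      have ht : ∀ x ∈ t, 1 ≤ x ∧ x ≤ k := fun x hx => h x (List.mem_cons_of_mem _ hx)
      have hcons : hProd (a :: t) = hh a * hProd t := by simp [hProd]
      rw [hcons, ih ht]
      have hcount : ∀ p : Fin k, (a :: t).count ((p : ℕ) + 1)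
          = t.count ((p : ℕ) + 1) + if (p : ℕ) + 1 = a then 1 else 0 := by
        intro p
        rw [List.count_cons]
        congr 1
        simp only [beq_iff_eq]
        exact if_congr eq_comm rfl rfl
      have hQ : ∏ p : Fin k, hh ((p : ℕ) + 1) ^ (if (p : ℕ) + 1 = a then 1 else 0) = hh a := by
        have hpa : a - 1 < k := by omega
        have hstep : ∀ p : Fin k, hh ((p : ℕ) + 1) ^ (if (p : ℕ) + 1 = a then 1 else 0)
            = if p = (⟨a - 1, hpa⟩ : Fin k) then hh ((p : ℕ) + 1) else 1 := by
          intro p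
          by_cases hp : p = (⟨a - 1, hpa⟩ : Fin k)
          · rw [if_pos hp, if_pos, pow_one]
            subst hp
            show ((⟨a - 1, hpa⟩ : Fin k) : ℕ) + 1 = a
            show a - 1 + 1 = a
            omega
          · rw [if_neg hp, if_neg, pow_zero]
            intro hc
            apply hp
            apply Fin.ext
            show (p : ℕ) = a - 1
            omega
        rw [Finset.prod_congr rfl fun p _ => hstep p, Finset.prod_ite_eq',
          if_pos (Finset.mem_univ _)]
        rw [show ((⟨a - 1, hpa⟩ : Fin k) : ℕ) = a - 1 from rfl]
        congr 1
        omega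
      have hsplit : ∏ p : Fin k, hh ((p : ℕ) + 1) ^ (a :: t).count ((p : ℕ) + 1)
          = (∏ p : Fin k, hh ((p : ℕ) + 1) ^ t.count ((p : ℕ) + 1))
            * ∏ p : Fin k, hh ((p : ℕ) + 1) ^ (if (p : ℕ) + 1 = a then 1 else 0) := by
        rw [← Finset.prod_mul_distrib]
        exact Finset.prod_congr rfl fun p _ => by rw [hcount p, pow_add]
      rw [hsplit, hQ]
      ring

lemma cnt_std (k : ℕ) (l : List ℕ) (h : KIrreducible k l) : Std k (cnt k l) := by
  intro p
  rw [cnt_apply]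
  have hp := p.2
  have hc := h.2.2 (k - ((p : ℕ) + 1)) (by omega)
  rw [show k - (k - ((p : ℕ) + 1)) = (p : ℕ) + 1 from by omega] at hc
  omega

lemma iot_mono (k : ℕ) (d : Fin k →₀ ℕ) :
    iot k (MvPolynomial.monomial d (1 : ℚ)) = ∏ p : Fin k, hh ((p : ℕ) + 1) ^ d p := by
  rw [MvPolynomial.monomial_eq, map_one, one_mul, map_finsuppProd]
  rw [Finsupp.prod_fintype _ _ (fun p => by rw [pow_zero, map_one])]
  refine Finset.prod_congr rfl fun p _ => ?_
  rw [map_pow, iot, MvPolynomial.rename_X, hh_succ]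

lemma iot_cnt (k : ℕ) (l : List ℕ) (h : ∀ x ∈ l, 1 ≤ x ∧ x ≤ k) :
    iot k (MvPolynomial.monomial (cnt k l) (1 : ℚ)) = hProd l := by
  rw [iot_mono, hProd_eq k l h]
  exact Finset.prod_congr rfl fun p _ => by rw [cnt_apply]

lemma cnt_inj (k : ℕ) (l1 l2 : List ℕ) (h1 : KIrreducible k l1) (h2 : KIrreducible k l2)
    (h : cnt k l1 = cnt k l2) : l1 = l2 := by
  apply List.Perm.eq_of_pairwise' h1.1.1 h2.1.1
  rw [List.perm_iff_count]
  intro a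
  by_cases ha : 1 ≤ a ∧ a ≤ k
  · have hcc := congrArg (fun d : Fin k →₀ ℕ => d ⟨a - 1, by omega⟩) h
    simp only [cnt_apply] at hcc
    rw [show ((⟨a - 1, by omega⟩ : Fin k) : ℕ) + 1 = a from by
      rw [show ((⟨a - 1, by omega⟩ : Fin k) : ℕ) = a - 1 from rfl]; omega] at hcc
    exact hcc
  · have hn1 : a ∉ l1 := fun hm =>
      ha ⟨h1.1.2 a hm, h1.2.1 a hm⟩
    have hn2 : a ∉ l2 := fun hm =>
      ha ⟨h2.1.2 a hm, h2.2.1 a hm⟩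
    rw [List.count_eq_zero_of_not_mem hn1, List.count_eq_zero_of_not_mem hn2]

/-! ### Construction of the irreducible partition with given exponents -/

def flatL (f : ℕ → ℕ) (m : ℕ) : List ℕ :=
  (List.range m).reverse.flatMap fun j => List.replicate (f j) j

lemma flatL_mem (f : ℕ → ℕ) (m : ℕ) {y : ℕ} (hy : y ∈ flatL f m) : y < m ∧ f y ≠ 0 := by
  obtain ⟨j, hj, hyj⟩ := List.mem_flatMap.1 hy
  rw [List.mem_reverse, List.mem_range] at hj
  obtain ⟨hf, rfl⟩ := List.mem_replicate.1 hyj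
  exact ⟨hj, hf⟩

lemma flatL_sorted (f : ℕ → ℕ) (m : ℕ) : (flatL f m).Pairwise (· ≥ ·) := by
  induction m with
  | zero => simp [flatL]
  | succ n ih =>
      rw [flatL, List.range_succ, List.reverse_append]
      simp only [List.reverse_singleton, List.singleton_append, List.flatMap_cons]
      rw [List.pairwise_append]
      refine ⟨?_, ih, ?_⟩
      · exact List.pairwise_replicate.2 (Or.inr le_rfl)
      · intro a haa b hbb
        have h1 : a = n := (List.mem_replicate.1 haa).2
        have h2 := (flatL_mem f n hbb).1
        omega

lemma flatL_count (f : ℕ → ℕ) (m x : ℕ) :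
    (flatL f m).count x = if x < m then f x else 0 := by
  induction m with
  | zero => simp [flatL]
  | succ n ih =>
      rw [flatL, List.range_succ, List.reverse_append]
      simp only [List.reverse_singleton, List.singleton_append, List.flatMap_cons]
      rw [List.count_append]
      rw [show ((List.range n).reverse.flatMap fun j => List.replicate (f j) j) = flatL f n
        from rfl, ih, List.count_replicate]
      by_cases h1 : x = n
      · subst h1
        simp
      · have hb : (n == x) = false := by simp [Ne.symm h1]
        simp only [hb, Bool.false_eq_true, if_false]
        by_cases h2 : x < n
        · rw [if_pos h2, if_pos (by omega), zero_add]
        · rw [if_neg h2, if_neg (by omega), zero_add]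

def mkL (k : ℕ) (d : Fin k →₀ ℕ) : List ℕ :=
  flatL (fun j => if h : 1 ≤ j ∧ j ≤ k then d ⟨j - 1, by omega⟩ else 0) (k + 1)

lemma mkL_mem (k : ℕ) (d : Fin k →₀ ℕ) {y : ℕ} (hy : y ∈ mkL k d) : 1 ≤ y ∧ y ≤ k := by
  have := (flatL_mem _ _ hy).2
  by_cases h : 1 ≤ y ∧ y ≤ k
  · exact h
  · rw [dif_neg h] at this
    exact absurd rfl this

lemma mkL_count (k : ℕ) (d : Fin k →₀ ℕ) (x : ℕ) (h1 : 1 ≤ x) (h2 : x ≤ k) :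
    (mkL k d).count x = d ⟨x - 1, by omega⟩ := by
  rw [mkL, flatL_count, if_pos (by omega), dif_pos ⟨h1, h2⟩]

lemma cnt_mkL (k : ℕ) (d : Fin k →₀ ℕ) : cnt k (mkL k d) = d := by
  ext p
  have hp := p.2
  rw [cnt_apply, mkL_count k d ((p : ℕ) + 1) (by omega) (by omega)]
  congr 1

lemma mkL_irreducible (k : ℕ) (d : Fin k →₀ ℕ) (hstd : Std k d) :
    KIrreducible k (mkL k d) := by
  refine ⟨⟨flatL_sorted _ _, fun x hx => (mkL_mem k d hx).1⟩,
    fun x hx => (mkL_mem k d hx).2, ?_⟩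
  intro i hi
  have h1 : 1 ≤ k - i := by omega
  have h2 : k - i ≤ k := by omega
  rw [mkL_count k d (k - i) h1 h2]
  have := hstd ⟨k - i - 1, by omega⟩
  rw [show ((⟨k - i - 1, by omega⟩ : Fin k) : ℕ) = k - i - 1 from rfl] at this
  omega

end St11

set_option synthInstance.maxHeartbeats 1000000
set_option maxHeartbeats 2000000

/-- The images of the homogeneous symmetric functions `h_λ`,
as `λ` ranges over the `k`-irreducible partitions, form a basis of the quotient
ring `Λ^{(k)}/I_k`.  (`hmem` records the true fact that `h_λ ∈ Λ^{(k)}` for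
`k`-bounded `λ`.) -/
theorem irreducible_h_basis_of_quotient (k : ℕ) (hk : 1 ≤ k)
    (hmem : ∀ l : List ℕ, IsPartition l → KBounded k l → hProd l ∈ LamKAlg k) :
    LinearIndependent ℚ
      (fun l : {l : List ℕ // KIrreducible k l} =>
        Ideal.Quotient.mk (rectIdeal k)
          (⟨hProd l.1, hmem l.1 l.2.1 l.2.2.1⟩ : LamKAlg k)) ∧
    Submodule.span ℚ
      (Set.range fun l : {l : List ℕ // KIrreducible k l} =>
        Ideal.Quotient.mk (rectIdeal k)
          (⟨hProd l.1, hmem l.1 l.2.1 l.2.2.1⟩ : LamKAlg k)) = ⊤ := by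
  classical
  have hfam : ∀ l : {l : List ℕ // KIrreducible k l},
      Ideal.Quotient.mk (rectIdeal k) (⟨hProd l.1, hmem l.1 l.2.1 l.2.2.1⟩ : LamKAlg k)
        = St11.QE k (Ideal.Quotient.mk (St11.JJ k)
            (MvPolynomial.monomial (St11.cnt k l.1) (1 : ℚ))) := by
    intro l
    rw [St11.QE_mk]
    congr 1
    apply Subtype.ext
    rw [St11.eqv_coe]
    exact (St11.iot_cnt k l.1 (fun x hx => ⟨l.2.1.2 x hx, l.2.2.1 x hx⟩)).symm
  constructor
  · have li0 := St11.quot_linearIndependent k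
    have hinj : Function.Injective (fun l : {l : List ℕ // KIrreducible k l} =>
        (⟨St11.cnt k l.1, St11.cnt_std k l.1 l.2⟩ : {d : Fin k →₀ ℕ // St11.Std k d})) := by
      intro l1 l2 h
      apply Subtype.ext
      exact St11.cnt_inj k l1.1 l2.1 l1.2 l2.2 (congrArg Subtype.val h)
    have li1 := li0.comp _ hinj
    have li2 := li1.map' (St11.QE k).toLinearEquiv.toLinearMap
      (LinearMap.ker_eq_bot.2 (St11.QE k).toLinearEquiv.injective)
    have hfe : (fun l : {l : List ℕ // KIrreducible k l} =>
        Ideal.Quotient.mk (rectIdeal k) (⟨hProd l.1, hmem l.1 l.2.1 l.2.2.1⟩ : LamKAlg k))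
        = (⇑(St11.QE k).toLinearEquiv.toLinearMap ∘
            ((fun a : {d : Fin k →₀ ℕ // St11.Std k d} =>
              Ideal.Quotient.mk (St11.JJ k) (MvPolynomial.monomial a.1 (1 : ℚ))) ∘
            (fun l : {l : List ℕ // KIrreducible k l} =>
              (⟨St11.cnt k l.1, St11.cnt_std k l.1 l.2⟩ : {d : Fin k →₀ ℕ // St11.Std k d})))) := by
      funext l
      exact hfam l
    rw [hfe]
    exact li2
  · have hset : (Set.range fun l : {l : List ℕ // KIrreducible k l} =>
        Ideal.Quotient.mk (rectIdeal k) (⟨hProd l.1, hmem l.1 l.2.1 l.2.2.1⟩ : LamKAlg k))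
        = ⇑(St11.QE k).toLinearEquiv.toLinearMap ''
            (Set.range fun a : {d : Fin k →₀ ℕ // St11.Std k d} =>
              Ideal.Quotient.mk (St11.JJ k) (MvPolynomial.monomial a.1 (1 : ℚ))) := by
      ext x
      simp only [Set.mem_range, Set.mem_image]
      constructor
      · rintro ⟨l, rfl⟩
        exact ⟨_, ⟨⟨St11.cnt k l.1, St11.cnt_std k l.1 l.2⟩, rfl⟩, (hfam l).symm⟩
      · rintro ⟨y, ⟨a, rfl⟩, rfl⟩
        refine ⟨⟨St11.mkL k a.1, St11.mkL_irreducible k a.1 a.2⟩, ?_⟩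
        rw [hfam ⟨St11.mkL k a.1, St11.mkL_irreducible k a.1 a.2⟩]
        rw [St11.cnt_mkL]
        rfl
    rw [hset, Submodule.span_image, St11.quot_span_top, Submodule.map_top]
    exact LinearMap.range_eq_top.2 (St11.QE k).toLinearEquiv.surjective
end
end

section
/- Let n ≥ 1, 1 ≤ m ≤ n, δ = (n−1, n−2, …, 1, 0), and let λ and μ be partitions of the same integer, each with at most n parts (padded with zeros to length n), such that μ is not ≥ λ in dominance order. Let w = [w_1,…,w_n] be a minimal-length coset representative of S_n/(S_m × S_{n−m}), i.e. w = [i_1,…,i_m, j_1,…,j_{n−m}] where i_1 < ⋯ < i_m and j_1 < ⋯ < j_{n−m} are complementary in {1,…,n}; let α = (α_1,…,α_m) and β = (β_1,…,β_{n−m}) be the first m and last n−m entries of the vector w^{-1}(μ+δ) − δ = (μ_{w_1} − (w_1 − 1), …, μ_{w_n} − (w_n − n)) (β is automatically a partition). If α_r ≥ λ_r for all r = 1,…,m, then, setting N = (α_1+⋯+α_m) − (λ_1+⋯+λ_m) and β^N = (β_1 + N, β_2, …, β_{n−m}), there exists j with (β^N)_1 + ⋯ + (β^N)_j < λ_{m+1}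 + ⋯ + λ_{m+j}; that is, β^N is not ≥ (λ_{m+1},…,λ_n) in dominance order. -/
open scoped BigOperators Classical

lemma aux_sm_le {k : ℕ} {g : Fin k → ℕ} (hg : StrictMono g) (j : Fin k) : (j : ℕ) ≤ g j := by
  induction' hj : (j : ℕ) with t ih generalizing j
  · exact Nat.zero_le _
  · have hjk := j.isLt
    have hlt : t < k := by omega
    have h1 := ih ⟨t, hlt⟩ rfl
    have h2 : (⟨t, hlt⟩ : Fin k) < j := by simp [Fin.lt_def, hj]
    have h3 := hg h2
    omega

lemma aux_sum_le {n : ℕ} (f : Fin n → ℤ) (hf : Antitone f) (S : Finset (Fin n)) :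
    ∑ q ∈ S, f q ≤ ∑ q ∈ Finset.univ.filter (fun q : Fin n => (q : ℕ) < S.card), f q := by
  have hkn : S.card ≤ n := by simpa using Finset.card_le_univ S
  set k := S.card with hk
  have h1 : ∑ q ∈ S, f q = ∑ j : Fin k, f (S.orderEmbOfFin hk.symm j) := by
    rw [← Finset.sum_coe_sort S f,
      ← Equiv.sum_comp (S.orderIsoOfFin hk.symm).toEquiv (fun x : S => f x)]
    simp [Finset.coe_orderIsoOfFin_apply]
  have h2 : Finset.univ.filter (fun q : Fin n => (q : ℕ) < k) =
      Finset.image (Fin.castLE hkn) Finset.univ := by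
    ext q
    simp only [Finset.mem_filter, Finset.mem_univ, true_and, Finset.mem_image]
    constructor
    · intro hq; exact ⟨⟨(q : ℕ), hq⟩, by ext; simp⟩
    · rintro ⟨j, -, rfl⟩; exact j.isLt
  have h3 : ∑ q ∈ Finset.univ.filter (fun q : Fin n => (q : ℕ) < k), f q
      = ∑ j : Fin k, f (Fin.castLE hkn j) := by
    rw [h2, Finset.sum_image (fun a _ b _ h => Fin.castLE_injective hkn h)]
  rw [h1, h3]
  apply Finset.sum_le_sum
  intro j _
  apply hf
  have hsm : StrictMono (fun j : Fin k => ((S.orderEmbOfFin hk.symm j : Fin n) : ℕ)) :=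
    Fin.val_strictMono.comp (S.orderEmbOfFin hk.symm).strictMono
  have := aux_sm_le hsm j
  exact Fin.le_def.mpr (by simpa using this)


lemma aux_card {n k : ℕ} (hkn : k ≤ n) :
    (Finset.univ.filter (fun q : Fin n => (q : ℕ) < k)).card = k := by
  have h2 : Finset.univ.filter (fun q : Fin n => (q : ℕ) < k) =
      Finset.image (Fin.castLE hkn) Finset.univ := by
    ext q
    simp only [Finset.mem_filter, Finset.mem_univ, true_and, Finset.mem_image]
    constructor
    · intro hq; exact ⟨⟨(q : ℕ), hq⟩, by ext; simp⟩
    · rintro ⟨j, -, rfl⟩; exact j.isLt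
  rw [h2, Finset.card_image_of_injective _ (Fin.castLE_injective hkn)]
  simp

/-- Let `1 ≤ m ≤ n`, and let `λ, μ` be partitions of the same
integer padded with zeros to length `n` (weakly decreasing functions
`Fin n → ℕ`), with `μ` not `≥ λ` in dominance order.  Let `w` be a
minimal-length coset representative of `S_n/(S_m × S_{n-m})`, i.e. a
permutation of `Fin n` whose one-line notation is increasing on the first `m`
and on the last `n-m` positions; the vector `w⁻¹(μ+δ) - δ` has entries
`v p = μ_{w(p)} - (w(p) - p)`, `α` being its first `m` entries and `β` its last
`n-m` entries.  If `α_r ≥ λ_r` for all `r ≤ m`, then, with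
`N = |α| - (λ₁ + ⋯ + λ_m)` and `β^N = (β₁+N, β₂, …)`, there is a `j` with
`1 ≤ j ≤ n-m` whose partial sum witnesses that `β^N` is not `≥ (λ_{m+1},…,λ_n)`
in dominance order: `N + Σ_{m ≤ p < m+j} v p < Σ_{m ≤ p < m+j} λ p`. -/
theorem beta_N_not_dominating
    (n m : ℕ) (hn : 1 ≤ n) (hm : 1 ≤ m) (hmn : m ≤ n)
    (lam mu : Fin n → ℕ) (hlam : Antitone lam) (hmu : Antitone mu)
    (hsum : ∑ i, lam i = ∑ i, mu i)
    (hndom : ∃ i : Fin n,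
      ∑ p ∈ Finset.univ.filter (fun p : Fin n => p ≤ i), mu p <
      ∑ p ∈ Finset.univ.filter (fun p : Fin n => p ≤ i), lam p)
    (w : Equiv.Perm (Fin n))
    (hw1 : ∀ p q : Fin n, p < q → (q : ℕ) < m → w p < w q)
    (hw2 : ∀ p q : Fin n, p < q → m ≤ (p : ℕ) → w p < w q)
    (halpha : ∀ p : Fin n, (p : ℕ) < m →
      (lam p : ℤ) ≤ (mu (w p) : ℤ) - ((w p : ℕ) : ℤ) + ((p : ℕ) : ℤ)) :
    ∃ j : ℕ, 1 ≤ j ∧ j ≤ n - m ∧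
      ((∑ p ∈ Finset.univ.filter (fun p : Fin n => (p : ℕ) < m),
          ((mu (w p) : ℤ) - ((w p : ℕ) : ℤ) + ((p : ℕ) : ℤ))) -
        ∑ p ∈ Finset.univ.filter (fun p : Fin n => (p : ℕ) < m), (lam p : ℤ)) +
      (∑ p ∈ Finset.univ.filter (fun p : Fin n => m ≤ (p : ℕ) ∧ (p : ℕ) < m + j),
          ((mu (w p) : ℤ) - ((w p : ℕ) : ℤ) + ((p : ℕ) : ℤ))) <
      ∑ p ∈ Finset.univ.filter (fun p : Fin n => m ≤ (p : ℕ) ∧ (p : ℕ) < m + j),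
          (lam p : ℤ) := by
  obtain ⟨i, hi⟩ := hndom
  set k : ℕ := (i : ℕ) + 1 with hkdef
  have hkn : k ≤ n := i.isLt
  set F : Finset (Fin n) := Finset.univ.filter (fun p : Fin n => (p : ℕ) < k) with hF
  have hfe : Finset.univ.filter (fun p : Fin n => p ≤ i) = F := by
    rw [hF]; ext p
    simp only [Finset.mem_filter, Finset.mem_univ, true_and, Fin.le_def]
    omega
  rw [hfe] at hi
  have hi' : ∑ p ∈ F, (mu p : ℤ) < ∑ p ∈ F, (lam p : ℤ) := by
    have := (Nat.cast_lt (α := ℤ)).mpr hi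
    push_cast at this
    exact this
  -- key inequality
  set f : Fin n → ℤ := fun q => (mu q : ℤ) - ((q : ℕ) : ℤ) with hfdef
  have hfAnti : Antitone f := by
    intro a b hab
    have h1 := hmu hab
    have h2 : (a : ℕ) ≤ (b : ℕ) := hab
    simp only [hfdef]
    omega
  have hFcard : F.card = k := aux_card hkn
  have himgcard : (F.image w).card = k := by
    rw [Finset.card_image_of_injective _ w.injective, hFcard]
  have hkey0 : ∑ p ∈ F, f (w p) ≤ ∑ q ∈ F, f q := by
    have h1 : ∑ p ∈ F, f (w p) = ∑ q ∈ F.image w, f q :=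
      (Finset.sum_image (fun a _ b _ h => w.injective h)).symm
    have h2 := aux_sum_le f hfAnti (F.image w)
    rw [himgcard] at h2
    rw [h1]
    exact h2.trans_eq rfl
  have hkey : ∑ p ∈ F, ((mu (w p) : ℤ) - ((w p : ℕ) : ℤ) + ((p : ℕ) : ℤ)) ≤
      ∑ p ∈ F, (mu p : ℤ) := by
    have hL : ∑ p ∈ F, ((mu (w p) : ℤ) - ((w p : ℕ) : ℤ) + ((p : ℕ) : ℤ))
        = ∑ p ∈ F, f (w p) + ∑ p ∈ F, ((p : ℕ) : ℤ) := by
      rw [← Finset.sum_add_distrib]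
    have hR : ∑ p ∈ F, (mu p : ℤ) = ∑ q ∈ F, f q + ∑ p ∈ F, ((p : ℕ) : ℤ) := by
      rw [← Finset.sum_add_distrib]
      apply Finset.sum_congr rfl
      intro p _
      simp [hfdef]
    rw [hL, hR]
    exact add_le_add hkey0 le_rfl
  have H2 : ∑ p ∈ F, ((mu (w p) : ℤ) - ((w p : ℕ) : ℤ) + ((p : ℕ) : ℤ)) <
      ∑ p ∈ F, (lam p : ℤ) := lt_of_le_of_lt hkey hi'
  have hmk : m < k := by
    by_contra h
    push_neg at h
    have hle : ∑ p ∈ F, (lam p : ℤ) ≤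
        ∑ p ∈ F, ((mu (w p) : ℤ) - ((w p : ℕ) : ℤ) + ((p : ℕ) : ℤ)) := by
      apply Finset.sum_le_sum
      intro p hp
      rw [hF, Finset.mem_filter] at hp
      exact halpha p (lt_of_lt_of_le hp.2 h)
    exact absurd H2 (not_lt.mpr hle)
  refine ⟨k - m, by omega, by omega, ?_⟩
  set F₁ : Finset (Fin n) := Finset.univ.filter (fun p : Fin n => (p : ℕ) < m) with hF₁
  set F₂ : Finset (Fin n) :=
    Finset.univ.filter (fun p : Fin n => m ≤ (p : ℕ) ∧ (p : ℕ) < m + (k - m)) with hF₂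
  have hU : F = F₁ ∪ F₂ := by
    rw [hF, hF₁, hF₂]; ext p
    simp only [Finset.mem_filter, Finset.mem_univ, true_and, Finset.mem_union]
    omega
  have hdisj : Disjoint F₁ F₂ := by
    rw [Finset.disjoint_left]
    intro a ha hb
    rw [hF₁, Finset.mem_filter] at ha
    rw [hF₂, Finset.mem_filter] at hb
    omega
  have hsplit : ∀ g : Fin n → ℤ, ∑ p ∈ F, g p = ∑ p ∈ F₁, g p + ∑ p ∈ F₂, g p := by
    intro g
    rw [hU, Finset.sum_union hdisj]
  have e1 := hsplit (fun p => (mu (w p) : ℤ) - ((w p : ℕ) : ℤ) + ((p : ℕ) : ℤ))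
  have e2 := hsplit (fun p => (lam p : ℤ))
  rw [e1, e2] at H2
  linarith
end
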